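/- arXiv:1603.01884 — 6 statements merged into one kernel-verified Lean document; each statement's English description precedes it below -/
import Mathlib

section
/- In a Banach algebra A, for any a, b ∈ A, e^{a+b} = lim_{n→∞} (e^{a/n} e^{b/n})^n (Trotter's product formula). -/
open NormedSpace Filter
open scoped Nat

set_option linter.unusedSectionVars false

namespace TrotterAux

section Part2
variable {A : Type*} [NormedRing A]

lemma pow_sub_pow_eq (p q : A) (n : ℕ) :
    p ^ n - q ^ n = ∑ i ∈ Finset.range n, p ^ i * (p - q) * q ^ (n - 1 - i) := by
  induction n with
  | zero => simp
  | succ n ih =>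
    rw [Finset.sum_range_succ]
    have hc : ∀ i ∈ Finset.range n,
        p ^ i * (p - q) * q ^ (n + 1 - 1 - i) = p ^ i * (p - q) * q ^ (n - 1 - i) * q := by
      intro i hi
      rw [Finset.mem_range] at hi
      have : n + 1 - 1 - i = (n - 1 - i) + 1 := by omega
      rw [this, pow_succ, ← mul_assoc]
    rw [Finset.sum_congr rfl hc, ← Finset.sum_mul, ← ih]
    simp only [Nat.add_sub_cancel, Nat.sub_self, pow_zero, mul_one]
    noncomm_ring

lemma norm_pow_sub_pow (p q : A) (n : ℕ) (Mp Mq : ℝ)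
    (hp : ∀ k ≤ n, ‖p ^ k‖ ≤ Mp) (hq : ∀ k ≤ n, ‖q ^ k‖ ≤ Mq) :
    ‖p ^ n - q ^ n‖ ≤ n * (Mp * Mq) * ‖p - q‖ := by
  have hMp : 0 ≤ Mp := (norm_nonneg _).trans (hp 0 (Nat.zero_le n))
  have hMq : 0 ≤ Mq := (norm_nonneg _).trans (hq 0 (Nat.zero_le n))
  rw [pow_sub_pow_eq]
  calc ‖∑ i ∈ Finset.range n, p ^ i * (p - q) * q ^ (n - 1 - i)‖
      ≤ ∑ i ∈ Finset.range n, ‖p ^ i * (p - q) * q ^ (n - 1 - i)‖ := norm_sum_le _ _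
    _ ≤ ∑ _i ∈ Finset.range n, Mp * ‖p - q‖ * Mq := by
        refine Finset.sum_le_sum fun i hi => ?_
        rw [Finset.mem_range] at hi
        calc ‖p ^ i * (p - q) * q ^ (n - 1 - i)‖
            ≤ ‖p ^ i * (p - q)‖ * ‖q ^ (n - 1 - i)‖ := norm_mul_le _ _
          _ ≤ ‖p ^ i‖ * ‖p - q‖ * ‖q ^ (n - 1 - i)‖ := by
              exact mul_le_mul_of_nonneg_right (norm_mul_le _ _) (norm_nonneg _)
          _ ≤ Mp * ‖p - q‖ * Mq := by
              have h1 := hp i (le_of_lt hi)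
              have h2 := hq (n - 1 - i) (by omega)
              exact mul_le_mul (mul_le_mul_of_nonneg_right h1 (norm_nonneg _)) h2
                (norm_nonneg _) (by positivity)
    _ = n * (Mp * Mq) * ‖p - q‖ := by
        rw [Finset.sum_const, Finset.card_range, nsmul_eq_mul]; ring

lemma norm_natCast_le' (n : ℕ) : ‖(n : A)‖ ≤ n * ‖(1 : A)‖ := by
  induction n with
  | zero => simp
  | succ n ih =>
    push_cast
    calc ‖(n : A) + 1‖ ≤ ‖(n : A)‖ + ‖(1 : A)‖ := norm_add_le _ _
      _ ≤ n * ‖(1 : A)‖ + ‖(1 : A)‖ := by linarith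
      _ = (n + 1) * ‖(1 : A)‖ := by ring

lemma norm_one_add_pow_sub_one (w : A) (k : ℕ) :
    ‖(1 + w) ^ k - 1‖ ≤ ‖(1 : A)‖ * ((1 + ‖w‖) ^ k - 1) := by
  have ha : (1 + w) ^ k = ∑ m ∈ Finset.range (k + 1), w ^ m * (k.choose m : A) := by
    rw [add_comm, (Commute.one_right w).add_pow]
    simp
  have hb : (1 + ‖w‖) ^ k = ∑ m ∈ Finset.range (k + 1), ‖w‖ ^ m * (k.choose m : ℝ) := by
    rw [add_comm, add_pow]
    simp
  rw [ha, Finset.sum_range_succ']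
  simp only [pow_zero, Nat.choose_zero_right, Nat.cast_one, one_mul, mul_one, add_sub_cancel_right]
  have hrhs : ‖(1 : A)‖ * ((1 + ‖w‖) ^ k - 1)
      = ∑ m ∈ Finset.range k, ‖(1 : A)‖ * (‖w‖ ^ (m + 1) * (k.choose (m + 1) : ℝ)) := by
    rw [hb, Finset.sum_range_succ']
    simp only [pow_zero, Nat.choose_zero_right, Nat.cast_one, one_mul, mul_one,
      add_sub_cancel_right]
    rw [Finset.mul_sum]
  rw [hrhs]
  refine (norm_sum_le _ _).trans (Finset.sum_le_sum fun m _ => ?_)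
  calc ‖w ^ (m + 1) * (k.choose (m + 1) : A)‖
      ≤ ‖w ^ (m + 1)‖ * ‖(k.choose (m + 1) : A)‖ := norm_mul_le _ _
    _ ≤ ‖w‖ ^ (m + 1) * ((k.choose (m + 1) : ℝ) * ‖(1 : A)‖) := by
        exact mul_le_mul (norm_pow_le' w (Nat.succ_pos m)) (norm_natCast_le' _)
          (norm_nonneg _) (pow_nonneg (norm_nonneg w) _)
    _ = ‖(1 : A)‖ * (‖w‖ ^ (m + 1) * (k.choose (m + 1) : ℝ)) := by ring

lemma norm_pow_le_of_sub_one (p : A) (c : ℝ) (h : ‖p - 1‖ ≤ c) (k : ℕ) :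
    ‖p ^ k‖ ≤ ‖(1 : A)‖ * (1 + c) ^ k := by
  have hc : 0 ≤ c := (norm_nonneg _).trans h
  have hp : p = 1 + (p - 1) := by abel
  calc ‖p ^ k‖ = ‖1 + ((1 + (p - 1)) ^ k - 1)‖ := by rw [← hp]; congr 1; abel
    _ ≤ ‖(1 : A)‖ + ‖(1 + (p - 1)) ^ k - 1‖ := norm_add_le _ _
    _ ≤ ‖(1 : A)‖ + ‖(1 : A)‖ * ((1 + ‖p - 1‖) ^ k - 1) := by
        exact add_le_add_right (norm_one_add_pow_sub_one _ _) _
    _ ≤ ‖(1 : A)‖ + ‖(1 : A)‖ * ((1 + c) ^ k - 1) := by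
        refine add_le_add_right (mul_le_mul_of_nonneg_left ?_ (norm_nonneg _)) _
        have := pow_le_pow_left₀ (by positivity : (0:ℝ) ≤ 1 + ‖p - 1‖)
          (by linarith : 1 + ‖p - 1‖ ≤ 1 + c) k
        linarith
    _ = ‖(1 : A)‖ * (1 + c) ^ k := by ring

end Part2

section Part13
variable {A : Type*} [NormedRing A] [NormedAlgebra ℂ A] [CompleteSpace A]

lemma real_exp_tsum (t : ℝ) : Real.exp t = ∑' n : ℕ, t ^ n / n ! := by
  rw [Real.exp_eq_exp_ℝ, exp_eq_tsum_div]

lemma norm_term (x : A) (n : ℕ) : ‖((n !:ℂ))⁻¹ • x ^ n‖ = (n ! : ℝ)⁻¹ * ‖x ^ n‖ := by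
  rw [norm_smul, norm_inv, Complex.norm_natCast]

lemma exp_sub_one (x : A) :
    exp x - 1 = ∑' n : ℕ, (((n+1)! :ℂ))⁻¹ • x ^ (n+1) := by
  have h := expSeries_summable' (𝕂 := ℂ) x
  have e : exp x = ∑' n : ℕ, ((n !:ℂ))⁻¹ • x ^ n := congrFun (exp_eq_tsum ℂ) x
  rw [e, h.tsum_eq_zero_add]
  simp [Nat.factorial]

set_option maxHeartbeats 1000000 in
lemma exp_sub_one_sub (x : A) :
    exp x - 1 - x = ∑' n : ℕ, (((n+2)! :ℂ))⁻¹ • x ^ (n+2) := by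
  have h := expSeries_summable' (𝕂 := ℂ) x
  have h1 : Summable fun n : ℕ => (((n+1)! :ℂ))⁻¹ • x ^ (n+1) :=
    (summable_nat_add_iff 1).mpr h
  have e : exp x = ∑' n : ℕ, ((n !:ℂ))⁻¹ • x ^ n := congrFun (exp_eq_tsum ℂ) x
  rw [e, h.tsum_eq_zero_add, h1.tsum_eq_zero_add]
  simp [Nat.factorial]

lemma hasSum_exp_real (t : ℝ) : HasSum (fun n : ℕ => t ^ n / n !) (Real.exp t) := by
  have := (Real.summable_pow_div_factorial t).hasSum
  rwa [← real_exp_tsum] at this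

lemma norm_exp_sub_one (x : A) : ‖exp x - 1‖ ≤ Real.exp ‖x‖ - 1 := by
  rw [exp_sub_one]
  have hs : HasSum (fun n : ℕ => ‖x‖ ^ (n+1) / (n+1)!) (Real.exp ‖x‖ - 1) := by
    have h := hasSum_exp_real ‖x‖
    have h1 : Summable fun n : ℕ => ‖x‖ ^ (n+1) / (n+1)! :=
      (summable_nat_add_iff 1).mpr (Real.summable_pow_div_factorial ‖x‖)
    have := Summable.tsum_eq_zero_add (Real.summable_pow_div_factorial ‖x‖)
    rw [← real_exp_tsum] at this
    simp only [pow_zero, Nat.factorial_zero, Nat.cast_one, div_one] at this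
    have : ∑' n : ℕ, ‖x‖ ^ (n+1) / (n+1)! = Real.exp ‖x‖ - 1 := by
      rw [this]; ring
    rw [← this]
    exact h1.hasSum
  refine tsum_of_norm_bounded hs fun n => ?_
  rw [norm_term]
  rw [div_eq_inv_mul]
  gcongr
  exact norm_pow_le' x (Nat.succ_pos n)

lemma norm_exp_sub_one_sub (x : A) :
    ‖exp x - 1 - x‖ ≤ ‖x‖ ^ 2 * Real.exp ‖x‖ := by
  rw [exp_sub_one_sub]
  have hs : HasSum (fun n : ℕ => ‖x‖ ^ 2 * (‖x‖ ^ n / n !)) (‖x‖ ^ 2 * Real.exp ‖x‖) :=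
    (hasSum_exp_real ‖x‖).mul_left _
  refine tsum_of_norm_bounded hs fun n => ?_
  rw [norm_term]
  calc ((n+2)! : ℝ)⁻¹ * ‖x ^ (n+2)‖ ≤ ((n+2)! : ℝ)⁻¹ * ‖x‖ ^ (n+2) := by
        gcongr; exact norm_pow_le' x (by omega)
    _ ≤ (n ! : ℝ)⁻¹ * ‖x‖ ^ (n+2) := by
        apply mul_le_mul_of_nonneg_right _ (pow_nonneg (norm_nonneg x) _)
        apply inv_anti₀
        · exact_mod_cast Nat.factorial_pos n
        · exact_mod_cast Nat.factorial_le (by omega)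
    _ = ‖x‖ ^ 2 * (‖x‖ ^ n / n !) := by ring


lemma exp_diff_identity (x y : A) :
    exp x * exp y - exp (x + y)
      = x * y + (1 + x) * (exp y - 1 - y) + (exp x - 1 - x) * exp y
        - (exp (x + y) - 1 - (x + y)) := by
  noncomm_ring

lemma norm_exp_le' (y : A) : ‖exp y‖ ≤ Real.exp ‖y‖ - 1 + ‖(1 : A)‖ := by
  calc ‖exp y‖ = ‖(exp y - 1) + 1‖ := by rw [sub_add_cancel]
    _ ≤ ‖exp y - 1‖ + ‖(1 : A)‖ := norm_add_le _ _
    _ ≤ Real.exp ‖y‖ - 1 + ‖(1 : A)‖ := by linarith [norm_exp_sub_one y]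

lemma norm_exp_mul_exp_sub_exp_add (x y : A) (s c : ℝ) (hx : ‖x‖ ≤ s) (hy : ‖y‖ ≤ s)
    (hsc : s ≤ c) :
    ‖exp x * exp y - exp (x + y)‖
      ≤ (1 + (‖(1 : A)‖ + c) * Real.exp c + Real.exp c * (Real.exp c + ‖(1 : A)‖)
          + 4 * Real.exp (2 * c)) * s ^ 2 := by
  have hs : 0 ≤ s := (norm_nonneg x).trans hx
  have hc : 0 ≤ c := hs.trans hsc
  have hxc : ‖x‖ ≤ c := hx.trans hsc
  have hyc : ‖y‖ ≤ c := hy.trans hsc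
  have e1 : ‖x * y‖ ≤ s ^ 2 := by
    calc ‖x * y‖ ≤ ‖x‖ * ‖y‖ := norm_mul_le _ _
      _ ≤ s * s := mul_le_mul hx hy (norm_nonneg _) hs
      _ = s ^ 2 := by ring
  have hRy : ‖exp y - 1 - y‖ ≤ s ^ 2 * Real.exp c := by
    refine (norm_exp_sub_one_sub y).trans ?_
    exact mul_le_mul (pow_le_pow_left₀ (norm_nonneg _) hy 2)
      (Real.exp_le_exp.mpr hyc) (Real.exp_nonneg _) (by positivity)
  have hRx : ‖exp x - 1 - x‖ ≤ s ^ 2 * Real.exp c := by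
    refine (norm_exp_sub_one_sub x).trans ?_
    exact mul_le_mul (pow_le_pow_left₀ (norm_nonneg _) hx 2)
      (Real.exp_le_exp.mpr hxc) (Real.exp_nonneg _) (by positivity)
  have e2 : ‖(1 + x) * (exp y - 1 - y)‖ ≤ (‖(1 : A)‖ + c) * (s ^ 2 * Real.exp c) := by
    calc ‖(1 + x) * (exp y - 1 - y)‖ ≤ ‖(1 : A) + x‖ * ‖exp y - 1 - y‖ := norm_mul_le _ _
      _ ≤ (‖(1 : A)‖ + c) * (s ^ 2 * Real.exp c) := by
          refine mul_le_mul ((norm_add_le _ _).trans (by linarith)) hRy (norm_nonneg _)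
            (by positivity)
  have e3 : ‖(exp x - 1 - x) * exp y‖ ≤ s ^ 2 * Real.exp c * (Real.exp c + ‖(1 : A)‖) := by
    calc ‖(exp x - 1 - x) * exp y‖ ≤ ‖exp x - 1 - x‖ * ‖exp y‖ := norm_mul_le _ _
      _ ≤ (s ^ 2 * Real.exp c) * (Real.exp c + ‖(1 : A)‖) := by
          refine mul_le_mul hRx ?_ (norm_nonneg _) (by positivity)
          refine (norm_exp_le' y).trans ?_
          have := Real.exp_le_exp.mpr hyc
          linarith
  have e4 : ‖exp (x + y) - 1 - (x + y)‖ ≤ 4 * Real.exp (2 * c) * s ^ 2 := by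
    refine (norm_exp_sub_one_sub (x + y)).trans ?_
    have hxy : ‖x + y‖ ≤ 2 * c := by
      have := norm_add_le x y; linarith
    have h1 : ‖x + y‖ ^ 2 ≤ (2 * s) ^ 2 := by
      refine pow_le_pow_left₀ (norm_nonneg _) ?_ 2
      have := norm_add_le x y; linarith
    have h2 : Real.exp ‖x + y‖ ≤ Real.exp (2 * c) := Real.exp_le_exp.mpr hxy
    calc ‖x + y‖ ^ 2 * Real.exp ‖x + y‖ ≤ (2 * s) ^ 2 * Real.exp (2 * c) :=
          mul_le_mul h1 h2 (Real.exp_nonneg _) (by positivity)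
      _ = 4 * Real.exp (2 * c) * s ^ 2 := by ring
  rw [exp_diff_identity]
  have n1 := norm_add_le (x * y + (1 + x) * (exp y - 1 - y)) ((exp x - 1 - x) * exp y)
  have n2 := norm_add_le (x * y) ((1 + x) * (exp y - 1 - y))
  calc ‖x * y + (1 + x) * (exp y - 1 - y) + (exp x - 1 - x) * exp y
        - (exp (x + y) - 1 - (x + y))‖
      ≤ ‖x * y + (1 + x) * (exp y - 1 - y) + (exp x - 1 - x) * exp y‖
        + ‖exp (x + y) - 1 - (x + y)‖ := norm_sub_le _ _
    _ ≤ ‖x * y + (1 + x) * (exp y - 1 - y)‖ + ‖(exp x - 1 - x) * exp y‖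
        + ‖exp (x + y) - 1 - (x + y)‖ := by linarith
    _ ≤ ‖x * y‖ + ‖(1 + x) * (exp y - 1 - y)‖ + ‖(exp x - 1 - x) * exp y‖
        + ‖exp (x + y) - 1 - (x + y)‖ := by linarith
    _ ≤ (1 + (‖(1 : A)‖ + c) * Real.exp c + Real.exp c * (Real.exp c + ‖(1 : A)‖)
          + 4 * Real.exp (2 * c)) * s ^ 2 := by
        nlinarith [e1, e2, e3, e4, sq_nonneg s, norm_nonneg (1 : A), Real.exp_nonneg c]

end Part13

end TrotterAux

open TrotterAux

/-- Trotter's product formula in a complex Banach algebra: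
`e^{a+b} = lim_n (e^{a/n} e^{b/n})^n`. -/
theorem stmt_2 {A : Type*} [NormedRing A] [NormedAlgebra ℂ A] [CompleteSpace A]
    (a b : A) :
    Tendsto (fun n : ℕ => (exp ((n : ℂ)⁻¹ • a) * exp ((n : ℂ)⁻¹ • b)) ^ n)
      atTop (nhds (exp (a + b))) := by
  set r : ℝ := ‖a‖ + ‖b‖ with hrdef
  have hr0 : 0 ≤ r := by positivity
  set K : ℝ := 1 + (‖(1 : A)‖ + r) * Real.exp r + Real.exp r * (Real.exp r + ‖(1 : A)‖)
      + 4 * Real.exp (2 * r) with hKdef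
  have hK0 : 0 ≤ K := by
    rw [hKdef]
    nlinarith [mul_nonneg (add_nonneg (norm_nonneg (1 : A)) hr0) (Real.exp_nonneg r),
      mul_nonneg (Real.exp_nonneg r) (add_nonneg (Real.exp_nonneg r) (norm_nonneg (1 : A))),
      Real.exp_nonneg (2 * r)]
  set M : ℝ := ‖(1 : A)‖ * Real.exp r with hMdef
  have hM0 : 0 ≤ M := by rw [hMdef]; positivity
  set C : ℝ := M * M * (K * r ^ 2) with hCdef
  rw [← tendsto_sub_nhds_zero_iff]
  refine squeeze_zero_norm' (a := fun n : ℕ => C / n) ?_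
    (tendsto_const_div_atTop_nhds_zero_nat C)
  filter_upwards [eventually_ge_atTop 1] with n hn
  have hn0 : (0 : ℝ) < n := by exact_mod_cast hn
  have hnc : (n : ℂ) ≠ 0 := by exact_mod_cast hn0.ne'
  set x : A := (n : ℂ)⁻¹ • a with hxdef
  set y : A := (n : ℂ)⁻¹ • b with hydef
  set s : ℝ := (n : ℝ)⁻¹ * r with hsdef
  have hs0 : 0 ≤ s := by rw [hsdef]; positivity
  have hxe : ‖x‖ = (n : ℝ)⁻¹ * ‖a‖ := by
    rw [hxdef, norm_smul, norm_inv, Complex.norm_natCast]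
  have hye : ‖y‖ = (n : ℝ)⁻¹ * ‖b‖ := by
    rw [hydef, norm_smul, norm_inv, Complex.norm_natCast]
  have hsum : ‖x‖ + ‖y‖ = s := by rw [hxe, hye, hsdef, hrdef]; ring
  have hx : ‖x‖ ≤ s := by nlinarith [norm_nonneg y]
  have hy : ‖y‖ ≤ s := by nlinarith [norm_nonneg x]
  have hsr : s ≤ r := by
    rw [hsdef]
    have h1 : (n : ℝ)⁻¹ ≤ 1 := by
      rw [inv_le_one_iff₀]; right; exact_mod_cast hn
    nlinarith
  set p : A := exp x * exp y with hpdef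
  set q : A := exp (x + y) with hqdef
  -- exp (a+b) = q ^ n
  have hqn : exp (a + b) = q ^ n := by
    have h1 : x + y = (n : ℂ)⁻¹ • (a + b) := by rw [hxdef, hydef, smul_add]
    have h2 : (n : ℕ) • ((n : ℂ)⁻¹ • (a + b)) = a + b := by
      rw [← Nat.cast_smul_eq_nsmul ℂ, smul_smul, mul_inv_cancel₀ hnc, one_smul]
    let +nondep : NormedAlgebra ℚ A := .restrictScalars ℚ ℂ A
    rw [hqdef, h1, ← exp_nsmul, h2]
  -- bound on ‖p - 1‖ and ‖q - 1‖
  have hes1 : (1 : ℝ) ≤ Real.exp ‖x‖ := Real.one_le_exp (norm_nonneg x)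
  have hes2 : (1 : ℝ) ≤ Real.exp ‖y‖ := Real.one_le_exp (norm_nonneg y)
  have hadd : Real.exp ‖x‖ * Real.exp ‖y‖ = Real.exp s := by
    rw [← Real.exp_add, hsum]
  have hp1 : ‖p - 1‖ ≤ Real.exp s - 1 := by
    have hid : p - 1 = (exp x - 1) * (exp y - 1) + (exp x - 1) + (exp y - 1) := by
      rw [hpdef]; noncomm_ring
    have h1 := norm_exp_sub_one x
    have h2 := norm_exp_sub_one y
    have hmul : ‖(exp x - 1) * (exp y - 1)‖ ≤ (Real.exp ‖x‖ - 1) * (Real.exp ‖y‖ - 1) :=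
      (norm_mul_le _ _).trans (mul_le_mul h1 h2 (norm_nonneg _) (by linarith))
    calc ‖p - 1‖ = ‖(exp x - 1) * (exp y - 1) + (exp x - 1) + (exp y - 1)‖ := by
          rw [hid]
      _ ≤ ‖(exp x - 1) * (exp y - 1) + (exp x - 1)‖ + ‖exp y - 1‖ := norm_add_le _ _
      _ ≤ ‖(exp x - 1) * (exp y - 1)‖ + ‖exp x - 1‖ + ‖exp y - 1‖ := by
          linarith [norm_add_le ((exp x - 1) * (exp y - 1)) (exp x - 1)]
      _ ≤ Real.exp s - 1 := by nlinarith
  have hq1 : ‖q - 1‖ ≤ Real.exp s - 1 := by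
    refine (norm_exp_sub_one (x + y)).trans ?_
    have : ‖x + y‖ ≤ s := (norm_add_le x y).trans_eq hsum
    linarith [Real.exp_le_exp.mpr this]
  -- uniform power bounds up to n
  have hpow : ∀ z : A, ‖z - 1‖ ≤ Real.exp s - 1 → ∀ k ≤ n, ‖z ^ k‖ ≤ M := by
    intro z hz k hk
    refine (norm_pow_le_of_sub_one z _ hz k).trans ?_
    have h1 : (1 + (Real.exp s - 1)) = Real.exp s := by ring
    rw [h1, hMdef]
    refine mul_le_mul_of_nonneg_left ?_ (norm_nonneg _)
    have h2 : Real.exp s ^ k ≤ Real.exp s ^ n :=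
      pow_le_pow_right₀ (Real.one_le_exp hs0) hk
    refine h2.trans_eq ?_
    rw [← Real.exp_nat_mul]
    congr 1
    rw [hsdef]
    field_simp
  have hdiff : ‖p - q‖ ≤ K * s ^ 2 := by
    rw [hpdef, hqdef, hKdef]
    exact norm_exp_mul_exp_sub_exp_add x y s r hx hy hsr
  -- final bound
  show ‖p ^ n - exp (a + b)‖ ≤ C / n
  rw [hqn]
  refine (norm_pow_sub_pow p q n M M (hpow p hp1) (hpow q hq1)).trans ?_
  calc (n : ℝ) * (M * M) * ‖p - q‖ ≤ (n : ℝ) * (M * M) * (K * s ^ 2) := by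
        refine mul_le_mul_of_nonneg_left hdiff (by positivity)
    _ = C / n := by
        rw [hCdef, hsdef]
        field_simp
end

section
/- In a unital Banach algebra, for any a, b ∈ A, the element e^{a+b} belongs to the closed subgroup of the group of invertibles generated by the elements e^{a/n} and e^{b/n} for n = 1, 2, …. -/
open NormedSpace Filter Nat

section aux

variable {B : Type*} [NormedRing B] [NormOneClass B]

lemma my_norm_pow_le (x : B) (M : ℝ) (hx : ‖x‖ ≤ M) : ∀ n : ℕ, ‖x ^ n‖ ≤ M ^ n := by
  intro n
  induction n with
  | zero => simp
  | succ n ih =>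
    calc ‖x ^ (n + 1)‖ = ‖x ^ n * x‖ := by rw [pow_succ]
      _ ≤ ‖x ^ n‖ * ‖x‖ := norm_mul_le _ _
      _ ≤ M ^ n * M := by
          have h0 : (0:ℝ) ≤ M := le_trans (norm_nonneg x) hx
          exact mul_le_mul ih hx (norm_nonneg x) (pow_nonneg h0 n)
      _ = M ^ (n + 1) := (pow_succ M n).symm

lemma my_pow_sub_pow (x y : B) (M : ℝ) (hM : 1 ≤ M) (hx : ‖x‖ ≤ M) (hy : ‖y‖ ≤ M) :
    ∀ n : ℕ, ‖x ^ n - y ^ n‖ ≤ n * M ^ n * ‖x - y‖ := by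
  intro n
  have h0 : (0:ℝ) ≤ M := zero_le_one.trans hM
  induction n with
  | zero => simp
  | succ n ih =>
    have key : x ^ (n+1) - y ^ (n+1) = x ^ n * (x - y) + (x ^ n - y ^ n) * y := by
      noncomm_ring
    calc ‖x ^ (n+1) - y ^ (n+1)‖ ≤ ‖x ^ n * (x - y)‖ + ‖(x ^ n - y ^ n) * y‖ := by
          rw [key]; exact norm_add_le _ _
      _ ≤ ‖x ^ n‖ * ‖x - y‖ + ‖x ^ n - y ^ n‖ * ‖y‖ :=
          add_le_add (norm_mul_le _ _) (norm_mul_le _ _)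
      _ ≤ M ^ n * ‖x - y‖ + (n * M ^ n * ‖x - y‖) * M := by
          exact add_le_add
            (mul_le_mul_of_nonneg_right (my_norm_pow_le x M hx n) (norm_nonneg _))
            (mul_le_mul ih hy (norm_nonneg _) (by positivity))
      _ ≤ M ^ (n+1) * ‖x - y‖ + (n * M ^ (n+1) * ‖x - y‖) := by
          have h1 : M ^ n ≤ M ^ (n+1) := pow_le_pow_right₀ hM (Nat.le_succ n)
          have h2 : (n * M ^ n * ‖x - y‖) * M = n * (M ^ n * M) * ‖x - y‖ := by ring
          rw [h2, ← pow_succ]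
          gcongr
      _ = (↑(n+1)) * M ^ (n+1) * ‖x - y‖ := by push_cast; ring

end aux

section expB

variable {B : Type*} [NormedRing B] [NormedAlgebra ℂ B] [CompleteSpace B] [NormOneClass B]

lemma my_norm_exp_le (x : B) : ‖exp x‖ ≤ Real.exp ‖x‖ := by
  rw [exp_eq_tsum ℂ, Real.exp_eq_exp_ℝ, exp_eq_tsum_div]
  refine (norm_tsum_le_tsum_norm (norm_expSeries_summable' (𝕂 := ℂ) x)).trans ?_
  refine Summable.tsum_le_tsum (fun n => ?_) (norm_expSeries_summable' (𝕂 := ℂ) x)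
    (Real.summable_pow_div_factorial ‖x‖)
  rw [norm_smul, norm_inv, Complex.norm_natCast, div_eq_inv_mul]
  gcongr
  exact norm_pow_le x n

lemma my_exp_quadratic (x : B) : ‖exp x - 1 - x‖ ≤ ‖x‖ ^ 2 * Real.exp ‖x‖ := by
  have hs : Summable fun n : ℕ => ‖((n ! : ℂ))⁻¹ • x ^ n‖ := norm_expSeries_summable' x
  have hsum : Summable fun n : ℕ => ((n ! : ℂ))⁻¹ • x ^ n := hs.of_norm
  have h0 : ((0! : ℂ))⁻¹ • x ^ 0 = 1 := by simp
  have h1 : ((1! : ℂ))⁻¹ • x ^ 1 = x := by simp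
  have hexp : exp x = 1 + x + ∑' n : ℕ, ((n + 2)! : ℂ)⁻¹ • x ^ (n + 2) := by
    simp only [exp_eq_tsum ℂ]
    have hsum2 : Summable fun n : ℕ => ((n + 1)! : ℂ)⁻¹ • x ^ (n + 1) :=
      hsum.comp_injective (add_left_injective 1)
    rw [Summable.tsum_eq_zero_add hsum, Summable.tsum_eq_zero_add hsum2, h0, h1]
    abel
  rw [hexp]
  have heq : 1 + x + (∑' n : ℕ, ((n + 2)! : ℂ)⁻¹ • x ^ (n + 2)) - 1 - x
      = ∑' n : ℕ, ((n + 2)! : ℂ)⁻¹ • x ^ (n + 2) := by abel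
  rw [heq]
  have hs2 : Summable fun n : ℕ => ‖(((n + 2)! : ℂ))⁻¹ • x ^ (n + 2)‖ :=
    hs.comp_injective (fun m n h => by omega)
  refine (norm_tsum_le_tsum_norm hs2).trans ?_
  have hb : ∀ n : ℕ, ‖(((n + 2)! : ℂ))⁻¹ • x ^ (n + 2)‖ ≤ ‖x‖ ^ 2 * (‖x‖ ^ n / n !) := by
    intro n
    rw [norm_smul, norm_inv, Complex.norm_natCast]
    have h1 : ‖x ^ (n + 2)‖ ≤ ‖x‖ ^ 2 * ‖x‖ ^ n := by
      calc ‖x ^ (n + 2)‖ ≤ ‖x‖ ^ (n + 2) := norm_pow_le x (n + 2)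
        _ = ‖x‖ ^ 2 * ‖x‖ ^ n := by ring
    have h2 : ((n ! : ℝ))⁻¹ ≥ (((n + 2)! : ℝ))⁻¹ := by
      apply inv_anti₀
      · exact_mod_cast Nat.factorial_pos n
      · exact_mod_cast Nat.factorial_le (by omega : n ≤ n + 2)
    calc (((n + 2)! : ℝ))⁻¹ * ‖x ^ (n + 2)‖ ≤ ((n ! : ℝ))⁻¹ * (‖x‖ ^ 2 * ‖x‖ ^ n) := by
          apply mul_le_mul h2 h1 (norm_nonneg _)
          positivity
      _ = ‖x‖ ^ 2 * (‖x‖ ^ n / n !) := by ring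
  refine (Summable.tsum_le_tsum hb hs2 ?_).trans ?_
  · exact (Real.summable_pow_div_factorial ‖x‖).mul_left _
  · rw [tsum_mul_left, Real.exp_eq_exp_ℝ, exp_eq_tsum_div]

-- Trotter product formula
set_option maxHeartbeats 1000000 in
lemma my_trotter (a b : B) :
    Tendsto (fun n : ℕ => (exp ((n : ℂ)⁻¹ • a) * exp ((n : ℂ)⁻¹ • b)) ^ n) atTop
      (nhds (exp (a + b))) := by
  set c : ℝ := ‖a‖ + ‖b‖ with hc
  have hc0 : 0 ≤ c := by positivity
  set P : ℝ := ‖a‖ ^ 2 + ‖a‖ * ‖b‖ ^ 2 + ‖b‖ ^ 2 + ‖a‖ * ‖b‖ + c ^ 2 with hP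
  set E : ℝ := Real.exp c with hE
  have hE1 : (1:ℝ) ≤ E := Real.one_le_exp hc0
  have hP0 : 0 ≤ P := by positivity
  rw [← tendsto_sub_nhds_zero_iff]
  apply squeeze_zero_norm' (a := fun n : ℕ => P * (E * E * E) / n)
  · filter_upwards [eventually_ge_atTop 1] with n hn
    have hn0 : (0:ℝ) < n := by exact_mod_cast hn
    have hnc : ((n : ℂ)) ≠ 0 := by exact_mod_cast hn0.ne'
    set u := (n : ℂ)⁻¹ • a with hu
    set v := (n : ℂ)⁻¹ • b with hv
    set w := (n : ℂ)⁻¹ • (a + b) with hw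
    have hwu : w = u + v := by rw [hu, hv, hw, smul_add]
    have hnu : ‖u‖ = ‖a‖ / n := by
      rw [hu, norm_smul, norm_inv, Complex.norm_natCast, div_eq_inv_mul]
    have hnv : ‖v‖ = ‖b‖ / n := by
      rw [hv, norm_smul, norm_inv, Complex.norm_natCast, div_eq_inv_mul]
    have hnw : ‖w‖ ≤ c / n := by
      rw [hw, norm_smul, norm_inv, Complex.norm_natCast, div_eq_inv_mul]
      gcongr
      exact norm_add_le a b
    have hn1 : (1:ℝ) ≤ n := by exact_mod_cast hn
    have hua : ‖u‖ ≤ ‖a‖ := by rw [hnu]; exact div_le_self (norm_nonneg a) hn1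
    have hvb : ‖v‖ ≤ ‖b‖ := by rw [hnv]; exact div_le_self (norm_nonneg b) hn1
    have hwc : ‖w‖ ≤ c := hnw.trans (div_le_self hc0 hn1)
    have hac : ‖a‖ ≤ c := by rw [hc]; linarith [norm_nonneg b]
    have hbc : ‖b‖ ≤ c := by rw [hc]; linarith [norm_nonneg a]
    have hEu : Real.exp ‖u‖ ≤ E := Real.exp_le_exp.mpr (hua.trans hac)
    have hEv : Real.exp ‖v‖ ≤ E := Real.exp_le_exp.mpr (hvb.trans hbc)
    have hEw : Real.exp ‖w‖ ≤ E := Real.exp_le_exp.mpr hwc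
    have hEu' : Real.exp (‖a‖ / n) ≤ E := by rw [← hnu]; exact hEu
    have hEv' : Real.exp (‖b‖ / n) ≤ E := by rw [← hnv]; exact hEv
    have hE0 : (0:ℝ) ≤ E := zero_le_one.trans hE1
    have hEE1 : (1:ℝ) ≤ E * E := by nlinarith
    have hEvE : Real.exp ‖v‖ ≤ E * E := hEv.trans (by nlinarith)
    have hEwE : Real.exp ‖w‖ ≤ E * E := hEw.trans (by nlinarith)
    have hEv2' : Real.exp (‖b‖ / n) ≤ E * E := by rw [← hnv]; exact hEvE
    -- exp(a+b) = (exp w)^n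
    have hy : exp (a + b) = exp w ^ n := by
      letI : NormedAlgebra ℚ B := NormedAlgebra.restrictScalars ℚ ℂ B
      rw [← exp_nsmul, hw, ← Nat.cast_smul_eq_nsmul ℂ, smul_smul, mul_inv_cancel₀ hnc, one_smul]
    -- norms of x and y
    have hMx : ‖exp u * exp v‖ ≤ Real.exp (c / n) := by
      calc ‖exp u * exp v‖ ≤ ‖exp u‖ * ‖exp v‖ := norm_mul_le _ _
        _ ≤ Real.exp ‖u‖ * Real.exp ‖v‖ :=
            mul_le_mul (my_norm_exp_le u) (my_norm_exp_le v) (norm_nonneg _)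
              (Real.exp_pos _).le
        _ = Real.exp (‖u‖ + ‖v‖) := (Real.exp_add _ _).symm
        _ ≤ Real.exp (c / n) := by
            apply Real.exp_le_exp.mpr
            rw [hnu, hnv, hc, ← add_div]
    have hMy : ‖exp w‖ ≤ Real.exp (c / n) := (my_norm_exp_le w).trans (Real.exp_le_exp.mpr hnw)
    -- the key difference bound
    have hdiff : ‖exp u * exp v - exp w‖ ≤ P / n ^ 2 * (E * E) := by
      have hid : exp u * exp v - exp w =
          (exp u - 1 - u) * exp v + u * (exp v - 1 - v) + (exp v - 1 - v)
            + u * v - (exp w - 1 - w) := by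
        rw [hwu]; noncomm_ring
      have t1 : ‖(exp u - 1 - u) * exp v‖ ≤ ‖a‖ ^ 2 / n ^ 2 * (E * E) :=
        calc ‖(exp u - 1 - u) * exp v‖ ≤ ‖exp u - 1 - u‖ * ‖exp v‖ := norm_mul_le _ _
          _ ≤ ‖u‖ ^ 2 * Real.exp ‖u‖ * Real.exp ‖v‖ :=
              mul_le_mul (my_exp_quadratic u) (my_norm_exp_le v) (norm_nonneg _) (by positivity)
          _ ≤ (‖a‖ / n) ^ 2 * E * E := by
              rw [hnu, hnv]
              exact mul_le_mul (mul_le_mul_of_nonneg_left hEu' (by positivity)) hEv'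
                (Real.exp_pos _).le (by positivity)
          _ = ‖a‖ ^ 2 / n ^ 2 * (E * E) := by rw [div_pow]; ring
      have t2 : ‖u * (exp v - 1 - v)‖ ≤ ‖a‖ * ‖b‖ ^ 2 / n ^ 2 * (E * E) :=
        calc ‖u * (exp v - 1 - v)‖ ≤ ‖u‖ * ‖exp v - 1 - v‖ := norm_mul_le _ _
          _ ≤ ‖u‖ * (‖v‖ ^ 2 * Real.exp ‖v‖) := by
              gcongr
              exact my_exp_quadratic v
          _ ≤ ‖a‖ * ((‖b‖ / n) ^ 2 * (E * E)) := by
              rw [hnv]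
              exact mul_le_mul hua (mul_le_mul_of_nonneg_left hEv2' (by positivity))
                (by positivity) (norm_nonneg a)
          _ = ‖a‖ * ‖b‖ ^ 2 / n ^ 2 * (E * E) := by rw [div_pow]; ring
      have t3 : ‖exp v - 1 - v‖ ≤ ‖b‖ ^ 2 / n ^ 2 * (E * E) :=
        calc ‖exp v - 1 - v‖ ≤ ‖v‖ ^ 2 * Real.exp ‖v‖ := my_exp_quadratic v
          _ ≤ (‖b‖ / n) ^ 2 * (E * E) := by
              rw [hnv]
              exact mul_le_mul_of_nonneg_left hEv2' (by positivity)
          _ = ‖b‖ ^ 2 / n ^ 2 * (E * E) := by rw [div_pow]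
      have t4 : ‖u * v‖ ≤ ‖a‖ * ‖b‖ / n ^ 2 * (E * E) :=
        calc ‖u * v‖ ≤ ‖u‖ * ‖v‖ := norm_mul_le _ _
          _ = ‖a‖ * ‖b‖ / n ^ 2 := by rw [hnu, hnv]; ring
          _ ≤ ‖a‖ * ‖b‖ / n ^ 2 * (E * E) :=
              le_mul_of_one_le_right (by positivity) hEE1
      have t5 : ‖exp w - 1 - w‖ ≤ c ^ 2 / n ^ 2 * (E * E) :=
        calc ‖exp w - 1 - w‖ ≤ ‖w‖ ^ 2 * Real.exp ‖w‖ := my_exp_quadratic w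
          _ ≤ (c / n) ^ 2 * (E * E) :=
              mul_le_mul (pow_le_pow_left₀ (norm_nonneg w) hnw 2) hEwE
                (Real.exp_pos _).le (by positivity)
          _ = c ^ 2 / n ^ 2 * (E * E) := by rw [div_pow]
      calc ‖exp u * exp v - exp w‖
          ≤ ‖(exp u - 1 - u) * exp v + u * (exp v - 1 - v) + (exp v - 1 - v) + u * v‖
              + ‖exp w - 1 - w‖ := by rw [hid]; exact norm_sub_le _ _
        _ ≤ (‖(exp u - 1 - u) * exp v + u * (exp v - 1 - v) + (exp v - 1 - v)‖ + ‖u * v‖)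
              + ‖exp w - 1 - w‖ := by gcongr; exact norm_add_le _ _
        _ ≤ ((‖(exp u - 1 - u) * exp v + u * (exp v - 1 - v)‖ + ‖exp v - 1 - v‖) + ‖u * v‖)
              + ‖exp w - 1 - w‖ := by gcongr; exact norm_add_le _ _
        _ ≤ (((‖(exp u - 1 - u) * exp v‖ + ‖u * (exp v - 1 - v)‖) + ‖exp v - 1 - v‖) + ‖u * v‖)
              + ‖exp w - 1 - w‖ := by gcongr; exact norm_add_le _ _
        _ ≤ P / n ^ 2 * (E * E) := by
            rw [hP]
            have := t1; have := t2; have := t3; have := t4; have := t5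
            have hexpand : (‖a‖ ^ 2 + ‖a‖ * ‖b‖ ^ 2 + ‖b‖ ^ 2 + ‖a‖ * ‖b‖ + c ^ 2) / n ^ 2 * (E * E)
                = ‖a‖ ^ 2 / n ^ 2 * (E * E) + ‖a‖ * ‖b‖ ^ 2 / n ^ 2 * (E * E)
                  + ‖b‖ ^ 2 / n ^ 2 * (E * E) + ‖a‖ * ‖b‖ / n ^ 2 * (E * E)
                  + c ^ 2 / n ^ 2 * (E * E) := by ring
            rw [hexpand]
            linarith
    -- power bound
    have hM1 : (1:ℝ) ≤ Real.exp (c / n) := Real.one_le_exp (by positivity)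
    have hpow := my_pow_sub_pow (exp u * exp v) (exp w) (Real.exp (c / n)) hM1 hMx hMy n
    have hMn : Real.exp (c / n) ^ n = E := by
      rw [← Real.exp_nat_mul, hE]
      congr 1
      field_simp
    calc ‖(exp u * exp v) ^ n - exp (a + b)‖
        = ‖(exp u * exp v) ^ n - exp w ^ n‖ := by rw [hy]
      _ ≤ n * Real.exp (c / n) ^ n * ‖exp u * exp v - exp w‖ := hpow
      _ ≤ n * E * (P / n ^ 2 * (E * E)) := by
          rw [hMn]
          gcongr
      _ = P * (E * E * E) / n := by field_simp
  · exact tendsto_const_div_atTop_nhds_zero_nat _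

end expB

section main

variable {A : Type*} [NormedRing A] [NormedAlgebra ℂ A] [CompleteSpace A]

/-- Left multiplication as a ring homomorphism into continuous linear maps. -/
noncomputable def myMulHom : A →+* (A →L[ℂ] A) where
  toFun x := ContinuousLinearMap.mul ℂ A x
  map_one' := by ext y; simp
  map_mul' x y := by ext z; simp [mul_assoc]
  map_zero' := by ext y; simp
  map_add' x y := by ext z; simp [add_mul]

lemma myMulHom_cont : Continuous (myMulHom (A := A)) :=
  (ContinuousLinearMap.mul ℂ A).continuous

lemma myMulHom_smul (z : ℂ) (x : A) : myMulHom (z • x) = z • myMulHom (A := A) x :=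
  (ContinuousLinearMap.mul ℂ A).map_smul z x

lemma myMulHom_norm_le (x : A) : ‖x‖ ≤ ‖(1 : A)‖ * ‖myMulHom x‖ := by
  have h : x = myMulHom x 1 := by simp [myMulHom]
  calc ‖x‖ = ‖myMulHom x 1‖ := by rw [← h]
    _ ≤ ‖myMulHom x‖ * ‖(1 : A)‖ := (myMulHom x).le_opNorm 1
    _ = ‖(1 : A)‖ * ‖myMulHom x‖ := mul_comm _ _

end main

/-- In a complex unital Banach algebra, `e^{a+b}` belongs to the closure (in the norm
topology) of the subgroup of the group of invertibles generated by the elements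
`e^{a/n}` and `e^{b/n}`, `n = 1, 2, …`. -/
theorem stmt_3 {A : Type*} [NormedRing A] [NormedAlgebra ℂ A] [CompleteSpace A]
    (a b : A) :
    exp (a + b) ∈
      closure ((fun u : Aˣ => (u : A)) ''
        (Subgroup.closure {u : Aˣ | ∃ n : ℕ, 0 < n ∧
          ((u : A) = exp ((n : ℂ)⁻¹ • a) ∨ (u : A) = exp ((n : ℂ)⁻¹ • b))} : Set Aˣ)) := by
  by_cases hA : Subsingleton A
  · refine subset_closure ⟨1, Subgroup.one_mem _, Subsingleton.elim _ _⟩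
  · have : Nontrivial A := not_subsingleton_iff_nontrivial.mp hA
    letI : NormedAlgebra ℚ A := NormedAlgebra.restrictScalars ℚ ℂ A
    letI : NormedAlgebra ℚ (A →L[ℂ] A) := NormedAlgebra.restrictScalars ℚ ℂ (A →L[ℂ] A)
    set S : Set Aˣ := {u : Aˣ | ∃ n : ℕ, 0 < n ∧
      ((u : A) = exp ((n : ℂ)⁻¹ • a) ∨ (u : A) = exp ((n : ℂ)⁻¹ • b))} with hS
    -- the units
    set U : ℕ → Aˣ := fun n =>
      (isUnit_exp ((n : ℂ)⁻¹ • a)).unit * (isUnit_exp ((n : ℂ)⁻¹ • b)).unit with hU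
    refine mem_closure_of_tendsto (b := atTop) (f := fun n : ℕ => ((U n ^ n : Aˣ) : A)) ?_ ?_
    · -- tendsto
      have hcoe : ∀ n : ℕ, ((U n ^ n : Aˣ) : A)
          = (exp ((n : ℂ)⁻¹ • a) * exp ((n : ℂ)⁻¹ • b)) ^ n := by
        intro n
        rw [Units.val_pow_eq_pow_val, hU]
        simp
      simp only [hcoe]
      -- transfer via myMulHom
      have hT := my_trotter (myMulHom a) (myMulHom (A := A) b)
      have hmap : ∀ n : ℕ, myMulHom ((exp ((n : ℂ)⁻¹ • a) * exp ((n : ℂ)⁻¹ • b)) ^ n)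
          = (exp ((n : ℂ)⁻¹ • myMulHom a) * exp ((n : ℂ)⁻¹ • myMulHom (A := A) b)) ^ n := by
        intro n
        rw [map_pow, map_mul, map_exp _ myMulHom_cont, map_exp _ myMulHom_cont,
          myMulHom_smul, myMulHom_smul]
      have hlim : exp (myMulHom a + myMulHom (A := A) b) = myMulHom (exp (a + b)) := by
        rw [← map_add, map_exp _ myMulHom_cont]
      rw [hlim] at hT
      simp only [← hmap] at hT
      -- now pull back
      rw [← tendsto_sub_nhds_zero_iff]
      apply squeeze_zero_norm'
        (a := fun n : ℕ => ‖(1 : A)‖ * ‖myMulHom ((exp ((n : ℂ)⁻¹ • a) * exp ((n : ℂ)⁻¹ • b)) ^ n)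
          - myMulHom (exp (a + b))‖)
      · filter_upwards with n
        rw [← map_sub]
        exact myMulHom_norm_le _
      · have : Tendsto (fun n : ℕ => myMulHom ((exp ((n : ℂ)⁻¹ • a) * exp ((n : ℂ)⁻¹ • b)) ^ n)
            - myMulHom (exp (a + b))) atTop (nhds 0) := by
          rw [tendsto_sub_nhds_zero_iff]
          exact hT
        have := this.norm
        rw [norm_zero] at this
        simpa using this.const_mul ‖(1 : A)‖
    · -- eventual membership
      filter_upwards [eventually_ge_atTop 1] with n hn
      refine ⟨U n ^ n, ?_, rfl⟩
      apply Subgroup.pow_mem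
      exact Subgroup.mul_mem _
        (Subgroup.subset_closure ⟨n, hn, Or.inl (IsUnit.unit_spec _)⟩)
        (Subgroup.subset_closure ⟨n, hn, Or.inr (IsUnit.unit_spec _)⟩)
end

section
/- In a unital C*-algebra, if p is a projection and x ∈ pA(1−p) with ‖x‖ ≤ 1, then the element q(x) with block components q₁₁ = (1+√(1−xx*))/2, q₁₂ = x/2, q₂₁ = x*/2, q₂₂ = (1−√(1−xx*))/2 (with respect to the decomposition induced by p) is a projection, i.e., q(x)² = q(x) and q(x)* = q(x). -/
open scoped ComplexOrder

open Polynomial in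
private lemma aeval_intertwine {A : Type*} [CStarAlgebra A] {u v x : A}
    (h : u * x = x * v) (q : ℝ[X]) : aeval u q * x = x * aeval v q := by
  have hpow : ∀ m : ℕ, u ^ m * x = x * v ^ m := by
    intro m; induction m with
    | zero => simp
    | succ m ih => rw [pow_succ, pow_succ, mul_assoc, h, ← mul_assoc, ih, mul_assoc]
  induction q using Polynomial.induction_on with
  | C r =>
      simp only [aeval_C, Algebra.algebraMap_eq_smul_one]
      simp [smul_mul_assoc, mul_smul_comm]
  | add q₁ q₂ h1 h2 => simp only [map_add, add_mul, mul_add, h1, h2]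
  | monomial n r _ =>
      simp only [map_mul, map_pow, aeval_C, aeval_X, Algebra.algebraMap_eq_smul_one]
      simp only [smul_mul_assoc, one_mul, mul_smul_comm]
      rw [hpow]

private lemma cfc_intertwine {A : Type*} [CStarAlgebra A] {u v x : A}
    (hu : IsSelfAdjoint u) (hv : IsSelfAdjoint v) (h : u * x = x * v)
    (f : ℝ → ℝ) (hf : Continuous f) : cfc f u * x = x * cfc f v := by
  have key : ∀ ε : ℝ, 0 < ε → ‖cfc f u * x - x * cfc f v‖ ≤ ε * (2 * (‖x‖ + 1)) := by
    intro ε hε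
    set M : ℝ := max (‖u‖ * ‖(1:A)‖) (‖v‖ * ‖(1:A)‖) with hM
    have hspecu : spectrum ℝ u ⊆ Set.Icc (-M) M := fun r hr => by
      have := spectrum.norm_le_norm_mul_of_mem hr
      rw [Real.norm_eq_abs, abs_le] at this
      exact ⟨by linarith [le_max_left (‖u‖ * ‖(1:A)‖) (‖v‖ * ‖(1:A)‖)],
        by linarith [le_max_left (‖u‖ * ‖(1:A)‖) (‖v‖ * ‖(1:A)‖)]⟩
    have hspecv : spectrum ℝ v ⊆ Set.Icc (-M) M := fun r hr => by
      have := spectrum.norm_le_norm_mul_of_mem hr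
      rw [Real.norm_eq_abs, abs_le] at this
      exact ⟨by linarith [le_max_right (‖u‖ * ‖(1:A)‖) (‖v‖ * ‖(1:A)‖)],
        by linarith [le_max_right (‖u‖ * ‖(1:A)‖) (‖v‖ * ‖(1:A)‖)]⟩
    obtain ⟨P, hP⟩ := exists_polynomial_near_of_continuousOn (-M) M f
      (hf.continuousOn) ε hε
    have hPc : Continuous fun s : ℝ => P.eval s := P.continuous_aeval
    have hcu : cfc f u - Polynomial.aeval u P =
        cfc (fun s => f s - P.eval s) u := by
      rw [cfc_sub f (fun s => P.eval s) u hf.continuousOn hPc.continuousOn,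
        cfc_polynomial P u]
    have hcv : cfc f v - Polynomial.aeval v P =
        cfc (fun s => f s - P.eval s) v := by
      rw [cfc_sub f (fun s => P.eval s) v hf.continuousOn hPc.continuousOn,
        cfc_polynomial P v]
    have hnu : ‖cfc f u - Polynomial.aeval u P‖ ≤ ε := by
      rw [hcu]
      refine norm_cfc_le hε.le fun r hr => ?_
      have := hP r (hspecu hr)
      rw [Real.norm_eq_abs, abs_sub_comm]
      exact this.le
    have hnv : ‖cfc f v - Polynomial.aeval v P‖ ≤ ε := by
      rw [hcv]
      refine norm_cfc_le hε.le fun r hr => ?_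
      have := hP r (hspecv hr)
      rw [Real.norm_eq_abs, abs_sub_comm]
      exact this.le
    have heq : cfc f u * x - x * cfc f v =
        (cfc f u - Polynomial.aeval u P) * x + x * (Polynomial.aeval v P - cfc f v) := by
      rw [sub_mul, mul_sub, aeval_intertwine h P]; abel
    rw [heq]
    calc ‖(cfc f u - Polynomial.aeval u P) * x + x * (Polynomial.aeval v P - cfc f v)‖
        ≤ ‖(cfc f u - Polynomial.aeval u P) * x‖ + ‖x * (Polynomial.aeval v P - cfc f v)‖ :=
          norm_add_le _ _
      _ ≤ ‖cfc f u - Polynomial.aeval u P‖ * ‖x‖ +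
          ‖x‖ * ‖Polynomial.aeval v P - cfc f v‖ := by
          gcongr <;> exact norm_mul_le _ _
      _ ≤ ε * ‖x‖ + ‖x‖ * ε := by
          have h1 : ‖Polynomial.aeval v P - cfc f v‖ ≤ ε := by rwa [norm_sub_rev]
          gcongr
      _ ≤ ε * (2 * (‖x‖ + 1)) := by nlinarith [norm_nonneg x]
  have h0 : ‖cfc f u * x - x * cfc f v‖ ≤ 0 := by
    by_contra hlt
    push_neg at hlt
    have h2 : (0:ℝ) < ‖x‖ + 1 := by positivity
    have hkey := key (‖cfc f u * x - x * cfc f v‖ / (4 * (‖x‖ + 1)))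
      (div_pos hlt (by positivity))
    have heq : ‖cfc f u * x - x * cfc f v‖ / (4 * (‖x‖ + 1)) * (2 * (‖x‖ + 1)) =
        ‖cfc f u * x - x * cfc f v‖ / 2 := by
      field_simp
      ring
    rw [heq] at hkey
    linarith
  rw [← sub_eq_zero]
  exact norm_le_zero_iff.mp h0

private lemma cfc_sqrt_eq' {A : Type*} [CStarAlgebra A] [PartialOrder A] [StarOrderedRing A]
    {u : A} (hu : 0 ≤ u) : cfc Real.sqrt u = CFC.sqrt u := by
  have hu' : IsSelfAdjoint u := IsSelfAdjoint.of_nonneg hu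
  symm
  refine CFC.sqrt_unique ?_ ?_
  · rw [← cfc_mul Real.sqrt Real.sqrt u (Real.continuous_sqrt.continuousOn)
      (Real.continuous_sqrt.continuousOn)]
    have heqon : (spectrum ℝ u).EqOn (fun r => Real.sqrt r * Real.sqrt r) id := by
      intro r hr
      have h0 : 0 ≤ r := by
        rw [StarOrderedRing.nonneg_iff_spectrum_nonneg (R := ℝ) u hu'] at hu
        exact hu r hr
      simp [Real.mul_self_sqrt h0]
    rw [cfc_congr heqon, cfc_id (R := ℝ) (a := u) hu']
  · exact cfc_nonneg fun r hr => Real.sqrt_nonneg r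

/-- In a unital C*-algebra, if `p` is a projection and `x ∈ pA(1−p)` is a contraction,
then `q(x)` with block components `(1+√(1−xx*))/2`, `x/2`, `x*/2`, `(1−√(1−xx*))/2`
(with respect to the decomposition induced by `p`, the square roots being those of
continuous functional calculus in the respective corners) is a projection. -/
theorem stmt_11 {A : Type*} [CStarAlgebra A] [PartialOrder A] [StarOrderedRing A]
    (p x : A) (hp : p * p = p) (hps : star p = p)
    (hx : p * x * (1 - p) = x) (hxn : ‖x‖ ≤ 1) :
    (let q : A := (2⁻¹ : ℂ) •
        (p + p * CFC.sqrt (1 - x * star x) * p + x + star x +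
          (1 - p) - (1 - p) * CFC.sqrt (1 - star x * x) * (1 - p));
      q * q = q ∧ star q = q) := by
  -- basic multiplication facts
  have hxp : x * p = 0 := by
    rw [← hx]; rw [mul_assoc, mul_assoc]
    have h0 : (1 - p) * p = 0 := by rw [sub_mul, one_mul, hp, sub_self]
    rw [h0, mul_zero, mul_zero]
  have hpx : p * x = x := by
    conv_lhs => rw [← hx]
    rw [← mul_assoc, ← mul_assoc, hp, hx]
  have hx1p : x * (1 - p) = x := by rw [mul_sub, mul_one, hxp, sub_zero]
  have h1px : (1 - p) * x = 0 := by rw [sub_mul, one_mul, hpx, sub_self]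
  have hsxp : star x * p = star x := by rw [← hps, ← star_mul, hpx]
  have hpsx : p * star x = 0 := by rw [← hps, ← star_mul, hxp, star_zero]
  have h1psx : (1 - p) * star x = star x := by rw [sub_mul, one_mul, hpsx, sub_zero]
  have hsx1p : star x * (1 - p) = 0 := by rw [mul_sub, mul_one, hsxp, sub_self]
  have hp1p : p * (1 - p) = 0 := by rw [mul_sub, mul_one, hp, sub_self]
  have h1pp : (1 - p) * p = 0 := by rw [sub_mul, one_mul, hp, sub_self]
  have h1p1p : (1 - p) * (1 - p) = 1 - p := by
    rw [sub_mul, one_mul, mul_sub, mul_one, hp]; abel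
  -- u and v
  obtain ⟨u, hu_def⟩ : ∃ u : A, u = 1 - x * star x := ⟨_, rfl⟩
  obtain ⟨v, hv_def⟩ : ∃ v : A, v = 1 - star x * x := ⟨_, rfl⟩
  have hxx_nonneg : (0:A) ≤ x * star x := mul_star_self_nonneg x
  have hsxx_nonneg : (0:A) ≤ star x * x := star_mul_self_nonneg x
  have hxxn : ‖x * star x‖ ≤ 1 := by
    calc ‖x * star x‖ ≤ ‖x‖ * ‖star x‖ := norm_mul_le _ _
      _ ≤ 1 * 1 := by rw [norm_star]; exact mul_le_mul hxn hxn (norm_nonneg x) zero_le_one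
      _ = 1 := one_mul 1
  have hsxxn : ‖star x * x‖ ≤ 1 := by
    calc ‖star x * x‖ ≤ ‖star x‖ * ‖x‖ := norm_mul_le _ _
      _ ≤ 1 * 1 := by rw [norm_star]; exact mul_le_mul hxn hxn (norm_nonneg x) zero_le_one
      _ = 1 := one_mul 1
  have hu_nonneg : (0:A) ≤ u := by
    rw [hu_def, sub_nonneg]
    exact (CStarAlgebra.norm_le_one_iff_of_nonneg _ hxx_nonneg).mp hxxn
  have hv_nonneg : (0:A) ≤ v := by
    rw [hv_def, sub_nonneg]
    exact (CStarAlgebra.norm_le_one_iff_of_nonneg _ hsxx_nonneg).mp hsxxn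
  have hu_sa : IsSelfAdjoint u := IsSelfAdjoint.of_nonneg hu_nonneg
  have hv_sa : IsSelfAdjoint v := IsSelfAdjoint.of_nonneg hv_nonneg
  -- s and t
  obtain ⟨s, hs_def⟩ : ∃ s : A, s = CFC.sqrt u := ⟨_, rfl⟩
  obtain ⟨t, ht_def⟩ : ∃ t : A, t = CFC.sqrt v := ⟨_, rfl⟩
  have hs_eq : s = cfc Real.sqrt u := by rw [hs_def, cfc_sqrt_eq' hu_nonneg]
  have ht_eq : t = cfc Real.sqrt v := by rw [ht_def, cfc_sqrt_eq' hv_nonneg]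
  have hs_nonneg : (0:A) ≤ s := hs_def ▸ CFC.sqrt_nonneg u
  have ht_nonneg : (0:A) ≤ t := ht_def ▸ CFC.sqrt_nonneg v
  have hs_sa : star s = s := IsSelfAdjoint.of_nonneg hs_nonneg
  have ht_sa : star t = t := IsSelfAdjoint.of_nonneg ht_nonneg
  have hss : s * s = u := by rw [hs_def]; exact CFC.sqrt_mul_sqrt_self u hu_nonneg
  have htt : t * t = v := by rw [ht_def]; exact CFC.sqrt_mul_sqrt_self v hv_nonneg
  -- intertwining relations
  have huv : u * x = x * v := by rw [hu_def, hv_def]; noncomm_ring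
  have hsxt : s * x = x * t := by
    rw [hs_eq, ht_eq]
    exact cfc_intertwine hu_sa hv_sa huv Real.sqrt Real.continuous_sqrt
  have htsx : t * star x = star x * s := by
    have h1 := congrArg star hsxt
    rw [star_mul, star_mul, hs_sa, ht_sa] at h1
    exact h1.symm
  have hup : u * p = p * u := by
    rw [hu_def]
    calc (1 - x * star x) * p = p - x * (star x * p) := by noncomm_ring
      _ = p - x * star x := by rw [hsxp]
      _ = p - (p * x) * star x := by rw [hpx]
      _ = p * (1 - x * star x) := by noncomm_ring
  have hsp : s * p = p * s := by
    rw [hs_eq]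
    exact cfc_intertwine hu_sa hu_sa hup Real.sqrt Real.continuous_sqrt
  have hv1p : v * (1 - p) = (1 - p) * v := by
    rw [hv_def]
    calc (1 - star x * x) * (1 - p) = (1 - p) - star x * (x * (1 - p)) := by noncomm_ring
      _ = (1 - p) - star x * x := by rw [hx1p]
      _ = (1 - p) - ((1 - p) * star x) * x := by rw [h1psx]
      _ = (1 - p) * (1 - star x * x) := by noncomm_ring
  have ht1p : t * (1 - p) = (1 - p) * t := by
    rw [ht_eq]
    exact cfc_intertwine hv_sa hv_sa hv1p Real.sqrt Real.continuous_sqrt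
  -- corners
  obtain ⟨a, ha_def⟩ : ∃ a : A, a = p * s * p := ⟨_, rfl⟩
  obtain ⟨b, hb_def⟩ : ∃ b : A, b = (1 - p) * t * (1 - p) := ⟨_, rfl⟩
  have ha1 : a = s * p := by rw [ha_def, ← hsp, mul_assoc, hp]
  have ha2 : a = p * s := by rw [ha1, hsp]
  have hb1 : b = t * (1 - p) := by rw [hb_def, ← ht1p, mul_assoc, h1p1p]
  have hb2 : b = (1 - p) * t := by rw [hb1, ht1p]
  -- products
  have haa : a * a = p - x * star x := by
    rw [ha1]
    calc s * p * (s * p) = s * (p * s) * p := by noncomm_ring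
      _ = s * (s * p) * p := by rw [← hsp]
      _ = s * s * (p * p) := by noncomm_ring
      _ = u * p := by rw [hss, hp]
      _ = p - x * (star x * p) := by rw [hu_def]; noncomm_ring
      _ = p - x * star x := by rw [hsxp]
  have hbb : b * b = 1 - p - star x * x := by
    rw [hb1]
    calc t * (1 - p) * (t * (1 - p)) = t * ((1 - p) * t) * (1 - p) := by noncomm_ring
      _ = t * (t * (1 - p)) * (1 - p) := by rw [← ht1p]
      _ = t * t * ((1 - p) * (1 - p)) := by noncomm_ring
      _ = v * (1 - p) := by rw [htt, h1p1p]
      _ = (1 - p) - star x * (x * (1 - p)) := by rw [hv_def]; noncomm_ring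
      _ = 1 - p - star x * x := by rw [hx1p]
  have hax : a * x = x * t := by rw [ha1, mul_assoc, hpx, hsxt]
  have hxb : x * b = x * t := by rw [hb2, ← mul_assoc, hx1p]
  have hax' : a * star x = 0 := by rw [ha1, mul_assoc, hpsx, mul_zero]
  have hab : a * b = 0 := by
    rw [ha1, hb2, mul_assoc, ← mul_assoc p (1 - p) t, hp1p, zero_mul, mul_zero]
  have hxa : x * a = 0 := by rw [ha2, ← mul_assoc, hxp, zero_mul]
  have hxx : x * x = 0 := by
    calc x * x = x * (1 - p) * x := by rw [hx1p]
      _ = x * ((1 - p) * x) := mul_assoc _ _ _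
      _ = 0 := by rw [h1px, mul_zero]
  have hx'a : star x * a = t * star x := by
    rw [ha1, ← mul_assoc, ← htsx, mul_assoc, hsxp]
  have hbx' : b * star x = t * star x := by rw [hb1, mul_assoc, h1psx]
  have hx'x' : star x * star x = 0 := by rw [← star_mul, hxx, star_zero]
  have hx'b : star x * b = 0 := by rw [hb2, ← mul_assoc, hsx1p, zero_mul]
  have hba : b * a = 0 := by
    rw [hb1, ha2, mul_assoc, ← mul_assoc (1 - p) p s, h1pp, zero_mul, mul_zero]
  have hbx : b * x = 0 := by rw [hb1, mul_assoc, h1px, mul_zero]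
  -- the central element
  obtain ⟨c, hc_def⟩ : ∃ c : A, c = a + x + star x - b := ⟨_, rfl⟩
  have hcc : c * c = 1 := by
    have expand : c * c =
        a * a + a * x + a * star x - a * b
        + (x * a + x * x + x * star x - x * b)
        + (star x * a + star x * x + star x * star x - star x * b)
        - (b * a + b * x + b * star x - b * b) := by
      rw [hc_def]; noncomm_ring
    rw [expand, haa, hax, hax', hab, hxa, hxx, hxb, hx'a, hx'x', hx'b, hba, hbx, hbx', hbb]
    abel
  have hc_sa : star c = c := by
    have hsa : star a = a := by
      rw [ha_def, star_mul, star_mul, hps, hs_sa, mul_assoc]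
    have hsb : star b = b := by
      have h1ps : star (1 - p) = 1 - p := by rw [star_sub, star_one, hps]
      rw [hb_def, star_mul, star_mul, h1ps, ht_sa, mul_assoc]
    rw [hc_def, star_sub, star_add, star_add, hsa, hsb, star_star]
    abel
  have hY : p + p * CFC.sqrt (1 - x * star x) * p + x + star x + (1 - p) -
      (1 - p) * CFC.sqrt (1 - star x * x) * (1 - p) = 1 + c := by
    rw [← hu_def, ← hv_def, ← hs_def, ← ht_def, ← ha_def, ← hb_def, hc_def]
    abel
  show ((2⁻¹ : ℂ) • (p + p * CFC.sqrt (1 - x * star x) * p + x + star x +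
          (1 - p) - (1 - p) * CFC.sqrt (1 - star x * x) * (1 - p))) *
        ((2⁻¹ : ℂ) • (p + p * CFC.sqrt (1 - x * star x) * p + x + star x +
          (1 - p) - (1 - p) * CFC.sqrt (1 - star x * x) * (1 - p))) =
        (2⁻¹ : ℂ) • (p + p * CFC.sqrt (1 - x * star x) * p + x + star x +
          (1 - p) - (1 - p) * CFC.sqrt (1 - star x * x) * (1 - p)) ∧
      star ((2⁻¹ : ℂ) • (p + p * CFC.sqrt (1 - x * star x) * p + x + star x +
          (1 - p) - (1 - p) * CFC.sqrt (1 - star x * x) * (1 - p))) =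
        (2⁻¹ : ℂ) • (p + p * CFC.sqrt (1 - x * star x) * p + x + star x +
          (1 - p) - (1 - p) * CFC.sqrt (1 - star x * x) * (1 - p))
  rw [hY]
  constructor
  · rw [smul_mul_smul_comm]
    have h2 : (1 + c) * (1 + c) = (2 : ℂ) • (1 + c) := by
      have e : (1 + c) * (1 + c) = 1 + c + c + c * c := by noncomm_ring
      rw [e, hcc, two_smul]
      abel
    rw [h2, smul_smul]
    congr 1
    norm_num
  · rw [star_smul, star_add, star_one, hc_sa]
    congr 1
    simp [Complex.ext_iff]
end

section
/- In M₂(C₀((0,M])⁺) (unitization), with t the identity function on (0,M], f = t^{1/2}, g = (1+t^{1/2})^{1/2}, the matrix [[1, t],[0, 1]] equals the multiplicative commutator of diag(g, g⁻¹) and [[1, f],[0, 1]]. -/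
noncomputable section

open scoped ComplexOrder

/-- The algebra of continuous functions on `(0, M]` (the unitized picture is realized
by working with `C((0,M], ℂ)` itself, which contains constants). -/
abbrev Bdl (M : ℝ) := C(Set.Ioc (0 : ℝ) M, ℂ)

/-- `t`, the identity function on `(0, M]`. -/
def tfun (M : ℝ) : Bdl M := ⟨fun x => (x.1 : ℂ), by fun_prop⟩

/-- `f = t^{1/2}`. -/
def ffun (M : ℝ) : Bdl M := ⟨fun x => (Real.sqrt x.1 : ℂ), by fun_prop⟩

/-- `g = (1 + t^{1/2})^{1/2}`. -/
def gfun (M : ℝ) : Bdl M := ⟨fun x => (Real.sqrt (1 + Real.sqrt x.1) : ℂ), by fun_prop⟩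

/-- `g⁻¹ = (1 + t^{1/2})^{-1/2}`. -/
def ginvfun (M : ℝ) : Bdl M :=
  ⟨fun x => ((Real.sqrt (1 + Real.sqrt x.1) : ℂ))⁻¹, by
    have h : Continuous fun x : Set.Ioc (0 : ℝ) M => Real.sqrt (1 + Real.sqrt x.1) := by
      fun_prop
    exact (Complex.continuous_ofReal.comp h).inv₀ fun x => by
      have hx : (0 : ℝ) < x.1 := x.2.1
      have : (0 : ℝ) < Real.sqrt (1 + Real.sqrt x.1) := by positivity
      simpa using Complex.ofReal_ne_zero.mpr (ne_of_gt this)⟩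

lemma gne (M : ℝ) (x : Set.Ioc (0:ℝ) M) :
    ((Real.sqrt (1 + Real.sqrt x.1) : ℂ)) ≠ 0 := by
  have hx : (0 : ℝ) < x.1 := x.2.1
  have : (0 : ℝ) < Real.sqrt (1 + Real.sqrt x.1) := by positivity
  simpa using Complex.ofReal_ne_zero.mpr (ne_of_gt this)

lemma g_mul_ginv (M : ℝ) : gfun M * ginvfun M = 1 := by
  ext x
  simp only [ContinuousMap.mul_apply, ContinuousMap.one_apply, gfun, ginvfun,
    ContinuousMap.coe_mk]
  exact mul_inv_cancel₀ (gne M x)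

/-- In `M₂` over (the unitization of) `C₀((0, M])`, with `t` the identity function,
`f = t^{1/2}` and `g = (1 + t^{1/2})^{1/2}`, the matrix `[[1, t], [0, 1]]` is the
multiplicative commutator of `diag(g, g⁻¹)` and `[[1, f], [0, 1]]`. -/
theorem stmt_13 (M : ℝ) (hM : 0 < M)
    (G U : (Matrix (Fin 2) (Fin 2) (Bdl M))ˣ)
    (hG : (G : Matrix (Fin 2) (Fin 2) (Bdl M)) = !![gfun M, 0; 0, ginvfun M])
    (hU : (U : Matrix (Fin 2) (Fin 2) (Bdl M)) = !![1, ffun M; 0, 1]) :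
    ((G * U * G⁻¹ * U⁻¹ : (Matrix (Fin 2) (Fin 2) (Bdl M))ˣ) :
        Matrix (Fin 2) (Fin 2) (Bdl M)) = !![1, tfun M; 0, 1] := by
  have hg := g_mul_ginv M
  have hg' : ginvfun M * gfun M = 1 := by rw [mul_comm]; exact hg
  have hGinv : ((G⁻¹ : (Matrix (Fin 2) (Fin 2) (Bdl M))ˣ) : Matrix (Fin 2) (Fin 2) (Bdl M))
      = !![ginvfun M, 0; 0, gfun M] := by
    have h1 : (G : Matrix (Fin 2) (Fin 2) (Bdl M)) * !![ginvfun M, 0; 0, gfun M] = 1 := by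
      rw [hG, Matrix.mul_fin_two, Matrix.one_fin_two]
      simp [hg, hg']
    calc ((G⁻¹ : (Matrix (Fin 2) (Fin 2) (Bdl M))ˣ) : Matrix (Fin 2) (Fin 2) (Bdl M))
        = ((G⁻¹ : (Matrix (Fin 2) (Fin 2) (Bdl M))ˣ) : Matrix (Fin 2) (Fin 2) (Bdl M)) *
            ((G : Matrix (Fin 2) (Fin 2) (Bdl M)) * !![ginvfun M, 0; 0, gfun M]) := by
            rw [h1, mul_one]
      _ = !![ginvfun M, 0; 0, gfun M] := by
            rw [← mul_assoc, ← Units.val_mul, inv_mul_cancel G, Units.val_one, one_mul]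
  have hUinv : ((U⁻¹ : (Matrix (Fin 2) (Fin 2) (Bdl M))ˣ) : Matrix (Fin 2) (Fin 2) (Bdl M))
      = !![1, -ffun M; 0, 1] := by
    have h1 : (U : Matrix (Fin 2) (Fin 2) (Bdl M)) * !![1, -ffun M; 0, 1] = 1 := by
      rw [hU, Matrix.mul_fin_two, Matrix.one_fin_two]
      simp
    calc ((U⁻¹ : (Matrix (Fin 2) (Fin 2) (Bdl M))ˣ) : Matrix (Fin 2) (Fin 2) (Bdl M))
        = ((U⁻¹ : (Matrix (Fin 2) (Fin 2) (Bdl M))ˣ) : Matrix (Fin 2) (Fin 2) (Bdl M)) *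
            ((U : Matrix (Fin 2) (Fin 2) (Bdl M)) * !![1, -ffun M; 0, 1]) := by
            rw [h1, mul_one]
      _ = !![1, -ffun M; 0, 1] := by
            rw [← mul_assoc, ← Units.val_mul, inv_mul_cancel U, Units.val_one, one_mul]
  rw [Units.val_mul, Units.val_mul, Units.val_mul, hG, hU, hGinv, hUinv,
    Matrix.mul_fin_two, Matrix.mul_fin_two, Matrix.mul_fin_two]
  simp only [mul_zero, zero_mul, add_zero, zero_add, mul_one, one_mul, mul_neg]
  rw [hg, hg']
  have key : 1 * -ffun M + gfun M * ffun M * gfun M = tfun M := by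
    ext x
    have hx : (0 : ℝ) < x.1 := x.2.1
    have hs : (Real.sqrt x.1 : ℂ) * (Real.sqrt x.1 : ℂ) = (x.1 : ℂ) := by
      rw [← Complex.ofReal_mul, Real.mul_self_sqrt hx.le]
    have hr : (Real.sqrt (1 + Real.sqrt x.1) : ℂ) * (Real.sqrt (1 + Real.sqrt x.1) : ℂ)
        = 1 + (Real.sqrt x.1 : ℂ) := by
      rw [← Complex.ofReal_mul, Real.mul_self_sqrt (by positivity)]
      push_cast; ring
    simp only [ContinuousMap.add_apply, ContinuousMap.mul_apply, ContinuousMap.neg_apply,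
      ContinuousMap.one_apply, gfun, ffun, tfun, ContinuousMap.coe_mk]
    linear_combination hs + (Real.sqrt x.1 : ℂ) * hr
  rw [key]

end
end

section
/- In M₂(R) over a commutative ring R, if g = 1 + h² for some h ∈ R and g is invertible with square root g^{1/2}, then diag(g, g⁻¹) is the multiplicative commutator of [[g^{1/2}, h],[0, g^{-1/2}]] and [[g^{-1/2}, 0],[h, g^{1/2}]]. -/
/-- In `M₂(R)` over a commutative ring `R`, if `g = 1 + h²` has an invertible square
root `r` (so `r² = g`), then `diag(g, g⁻¹)` is the multiplicative commutator of
`[[r, h],[0, r⁻¹]]` and `[[r⁻¹, 0],[h, r]]`. -/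
theorem stmt_14 {R : Type*} [CommRing R] (h : R) (r : Rˣ)
    (hg : (r : R) * (r : R) = 1 + h ^ 2)
    (U V : (Matrix (Fin 2) (Fin 2) R)ˣ)
    (hU : (U : Matrix (Fin 2) (Fin 2) R) = !![(r : R), h; 0, ((r⁻¹ : Rˣ) : R)])
    (hV : (V : Matrix (Fin 2) (Fin 2) R) = !![((r⁻¹ : Rˣ) : R), 0; h, (r : R)]) :
    ((U * V * U⁻¹ * V⁻¹ : (Matrix (Fin 2) (Fin 2) R)ˣ) : Matrix (Fin 2) (Fin 2) R) =
      !![(1 + h ^ 2 : R), 0; 0, ((r⁻¹ * r⁻¹ : Rˣ) : R)] := by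
  have hri : (r : R) * ((r⁻¹ : Rˣ) : R) = 1 := r.mul_inv
  have hir : ((r⁻¹ : Rˣ) : R) * (r : R) = 1 := r.inv_mul
  have hUinv : ((U⁻¹ : _) : Matrix (Fin 2) (Fin 2) R) =
      !![((r⁻¹ : Rˣ) : R), -h; 0, (r : R)] := by
    apply Units.inv_eq_of_mul_eq_one_right
    rw [hU]
    ext i j
    fin_cases i <;> fin_cases j <;>
      simp [Matrix.mul_apply, Fin.sum_univ_succ, hri, hir] <;> ring_nf <;>
      simp [hri, hir]
  have hVinv : ((V⁻¹ : _) : Matrix (Fin 2) (Fin 2) R) =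
      !![(r : R), 0; -h, ((r⁻¹ : Rˣ) : R)] := by
    apply Units.inv_eq_of_mul_eq_one_right
    rw [hV]
    ext i j
    fin_cases i <;> fin_cases j <;>
      simp [Matrix.mul_apply, Fin.sum_univ_succ, hri, hir] <;> ring_nf <;>
      simp [hri, hir]
  have : ((U * V * U⁻¹ * V⁻¹ : (Matrix (Fin 2) (Fin 2) R)ˣ) : Matrix (Fin 2) (Fin 2) R)
      = (U : Matrix (Fin 2) (Fin 2) R) * V * (U⁻¹ : _) * (V⁻¹ : _) := by
    push_cast; ring
  have hs : ((r⁻¹ : Rˣ) : R) * (1 + h ^ 2) = (r : R) := by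
    rw [← hg, ← mul_assoc, hir, one_mul]
  rw [this, hU, hV, hUinv, hVinv]
  ext i j
  fin_cases i <;> fin_cases j <;>
    simp [Matrix.mul_apply, Fin.sum_univ_succ] <;>
    (try field_simp) <;>
    first
      | rfl
      | linear_combination (-h^2) * hg
      | linear_combination h * hg
      | linear_combination -hg
      | linear_combination h * hs + h^2 * hg
      | linear_combination -hs + h^2 * hg
      | linear_combination h * hs
      | linear_combination -hs
end

section
/- Let A be a Banach algebra and let x, y ∈ A with ‖x‖ + ‖y‖ < log 2. Then log(e^x e^y) is defined (by the convergent Campbell–Baker–Hausdorff series / holomorphic functional calculus), and log(e^x e^y) − (x + y) belongs to the closed linear span of commutators [A, A]. -/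
open NormedSpace

section Aux

variable {A : Type*} [NormedRing A] [NormedAlgebra ℝ A] [CompleteSpace A]

/-- Noncommutative derivative of a power. -/
lemma aux_pow_hasDerivAt {a : ℝ → A} {a' : A} {s : ℝ} (ha : HasDerivAt a a' s) (n : ℕ) :
    HasDerivAt (fun t => a t ^ (n + 1))
      (∑ i ∈ Finset.range (n + 1), a s ^ i * a' * a s ^ (n - i)) s := by
  induction n with
  | zero => simpa using ha
  | succ n ih =>
      have h2 := ih.mul ha
      have hfun : (fun t => a t ^ (n + 1)) * a = fun t => a t ^ (n + 1 + 1) :=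
        funext fun t => (pow_succ _ _).symm
      rw [hfun] at h2
      convert h2 using 1
      rw [Finset.sum_range_succ, Finset.sum_mul]
      congr 1
      · refine Finset.sum_congr rfl fun i hi => ?_
        have hin : i ≤ n := Nat.lt_succ_iff.mp (Finset.mem_range.mp hi)
        rw [Nat.succ_sub hin]
        simp [pow_succ, mul_assoc]
      · rw [Nat.sub_self, pow_zero, mul_one]

lemma aux_norm_exp_sub_one (a : A) : ‖exp a - 1‖ ≤ Real.exp ‖a‖ - 1 := by
  have hsum : Summable fun n : ℕ => ((Nat.factorial n : ℝ))⁻¹ • a ^ n := expSeries_summable' a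
  have h1 : exp a = ∑' n : ℕ, ((Nat.factorial n : ℝ))⁻¹ • a ^ n := by
    rw [exp_eq_tsum ℝ]
  have h2 : exp a - 1 = ∑' n : ℕ, ((Nat.factorial (n + 1) : ℝ))⁻¹ • a ^ (n + 1) := by
    rw [h1, Summable.tsum_eq_zero_add hsum]
    simp
  have hRsum : Summable fun n : ℕ => ((Nat.factorial n : ℝ))⁻¹ • ‖a‖ ^ n := expSeries_summable' ‖a‖
  have h1R : Real.exp ‖a‖ = ∑' n : ℕ, ((Nat.factorial n : ℝ))⁻¹ • ‖a‖ ^ n := by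
    rw [Real.exp_eq_exp_ℝ, exp_eq_tsum ℝ]
  have hr : Real.exp ‖a‖ - 1 = ∑' n : ℕ, ((Nat.factorial (n + 1) : ℝ))⁻¹ * ‖a‖ ^ (n + 1) := by
    rw [h1R, Summable.tsum_eq_zero_add hRsum]
    simp [smul_eq_mul]
  have hRsum' : Summable fun n : ℕ => ((Nat.factorial (n + 1) : ℝ))⁻¹ * ‖a‖ ^ (n + 1) := by
    have := hRsum.comp_injective Nat.succ_injective
    simpa [Function.comp_def, smul_eq_mul] using this
  have hterm : ∀ n : ℕ, ‖((Nat.factorial (n + 1) : ℝ))⁻¹ • a ^ (n + 1)‖ ≤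
      ((Nat.factorial (n + 1) : ℝ))⁻¹ * ‖a‖ ^ (n + 1) := by
    intro n
    rw [norm_smul]
    gcongr
    · simp [abs_of_nonneg]
    · exact norm_pow_le' a (Nat.succ_pos n)
  rw [h2, hr]
  calc ‖∑' n : ℕ, ((Nat.factorial (n + 1) : ℝ))⁻¹ • a ^ (n + 1)‖
      ≤ ∑' n : ℕ, ‖((Nat.factorial (n + 1) : ℝ))⁻¹ • a ^ (n + 1)‖ :=
        norm_tsum_le_tsum_norm (hRsum'.of_nonneg_of_le (fun n => norm_nonneg _) hterm)
    _ ≤ ∑' n : ℕ, ((Nat.factorial (n + 1) : ℝ))⁻¹ * ‖a‖ ^ (n + 1) :=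
        (hRsum'.of_nonneg_of_le (fun n => norm_nonneg _) hterm).tsum_le_tsum hterm hRsum'

lemma aux_exp_neg_mul (a : A) : exp (-a) * exp a = 1 := by
  let +nondep : NormedAlgebra ℚ A := .restrictScalars ℚ ℝ A
  rw [← exp_add_of_commute ((Commute.refl a).neg_left), neg_add_cancel, exp_zero]

lemma aux_exp_mul_neg (a : A) : exp a * exp (-a) = 1 := by
  let +nondep : NormedAlgebra ℚ A := .restrictScalars ℚ ℝ A
  rw [← exp_add_of_commute ((Commute.refl a).neg_right), add_neg_cancel, exp_zero]

lemma aux_norm_w (x y : A) (t : ℝ) :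
    ‖exp (t • x) * exp (t • y) - 1‖ ≤ Real.exp (|t| * (‖x‖ + ‖y‖)) - 1 := by
  set a := exp (t • x) - 1 with ha
  set b := exp (t • y) - 1 with hb
  have hid : exp (t • x) * exp (t • y) - 1 = a * b + a + b := by
    rw [ha, hb]; noncomm_ring
  have hxa : ‖a‖ ≤ Real.exp (|t| * ‖x‖) - 1 := by
    have := aux_norm_exp_sub_one (t • x)
    rwa [norm_smul, Real.norm_eq_abs] at this
  have hxb : ‖b‖ ≤ Real.exp (|t| * ‖y‖) - 1 := by
    have := aux_norm_exp_sub_one (t • y)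
    rwa [norm_smul, Real.norm_eq_abs] at this
  have h1 : (1 : ℝ) ≤ Real.exp (|t| * ‖x‖) :=
    Real.one_le_exp (by positivity)
  have h2 : (1 : ℝ) ≤ Real.exp (|t| * ‖y‖) :=
    Real.one_le_exp (by positivity)
  have hsplit : Real.exp (|t| * (‖x‖ + ‖y‖)) = Real.exp (|t| * ‖x‖) * Real.exp (|t| * ‖y‖) := by
    rw [← Real.exp_add]; ring_nf
  have hna : 0 ≤ ‖a‖ := norm_nonneg _
  have hnb : 0 ≤ ‖b‖ := norm_nonneg _
  have hn3 : ‖a * b + a + b‖ ≤ ‖a‖ * ‖b‖ + ‖a‖ + ‖b‖ := by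
    have e1 := norm_add_le (a * b + a) b
    have e2 := norm_add_le (a * b) a
    have e3 := norm_mul_le a b
    nlinarith [norm_nonneg b]
  have hprod : ‖a‖ * ‖b‖ ≤ (Real.exp (|t| * ‖x‖) - 1) * (Real.exp (|t| * ‖y‖) - 1) :=
    mul_le_mul hxa hxb hnb (by linarith)
  have hPQ : (Real.exp (|t| * ‖x‖) - 1) * (Real.exp (|t| * ‖y‖) - 1)
      = Real.exp (|t| * ‖x‖) * Real.exp (|t| * ‖y‖) - Real.exp (|t| * ‖x‖)
        - Real.exp (|t| * ‖y‖) + 1 := by ring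
  rw [hid]
  rw [hsplit] at *
  linarith

set_option maxHeartbeats 2000000 in
/-- Key analytic lemma: a continuous tracial functional applied to the logarithm series of
`e^x e^y` gives `φ x + φ y`. -/
lemma aux_key (x y : A) (h : ‖x‖ + ‖y‖ < Real.log 2) (φ : A →L[ℝ] ℝ)
    (hτ : ∀ c d : A, φ (c * d) = φ (d * c)) :
    φ (∑' n : ℕ, (((-1 : ℝ) ^ n / (n + 1)) • (exp x * exp y - 1) ^ (n + 1)))
      = φ x + φ y := by
  rcases subsingleton_or_nontrivial A with hA | hA
  · simp [Subsingleton.elim x 0, Subsingleton.elim y 0,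
      Subsingleton.elim (∑' n : ℕ, (((-1 : ℝ) ^ n / (n + 1)) •
        (exp x * exp y - 1) ^ (n + 1))) (0 : A)]
  have h1A : (1 : ℝ) ≤ ‖(1 : A)‖ := one_le_norm_one A
  set c := ‖x‖ + ‖y‖ with hc
  have hc0 : 0 ≤ c := by positivity
  set L := Real.log 2 with hL
  have hLpos : 0 < L := Real.log_pos one_lt_two
  set k := 1 + (L - c) / (2 * L) with hk
  have hcL : c < L := h
  have hk1 : 1 < k := by
    rw [hk]
    have : 0 < (L - c) / (2 * L) := div_pos (by linarith) (by linarith)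
    linarith
  have hkc : k * c < L := by
    have hqc : (L - c) / (2 * L) * c ≤ (L - c) / 2 := by
      rw [div_mul_eq_mul_div, div_le_div_iff₀ (by linarith) (by norm_num)]
      nlinarith
    have : k * c = c + (L - c) / (2 * L) * c := by rw [hk]; ring
    rw [this]
    linarith
  have hk0 : 0 < k := lt_trans one_pos hk1
  set r := Real.exp (k * c) - 1 with hr
  have hr0 : 0 ≤ r := by
    have : (1 : ℝ) ≤ Real.exp (k * c) := Real.one_le_exp (by positivity)
    linarith
  have hr1 : r < 1 := by
    have : Real.exp (k * c) < Real.exp L := Real.exp_lt_exp.mpr hkc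
    rw [hL, Real.exp_log two_pos] at this
    linarith
  set I := Set.Ioo (-k) k with hI
  have h0I : (0 : ℝ) ∈ I := Set.mem_Ioo.mpr ⟨by linarith, hk0⟩
  have h1I : (1 : ℝ) ∈ I := Set.mem_Ioo.mpr ⟨by linarith, hk1⟩
  -- basic functions
  set E : ℝ → A := fun t => exp (t • x) * exp (t • y) with hE
  set w : ℝ → A := fun t => E t - 1 with hwdef
  set p : ℝ → A := fun t => x * E t + exp (t • x) * y * exp (t • y) with hp
  have hwt : ∀ t ∈ I, ‖w t‖ ≤ r := by
    intro t ht
    have habs : |t| ≤ k := le_of_lt (abs_lt.mpr ⟨ht.1, ht.2⟩)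
    refine le_trans (aux_norm_w x y t) ?_
    have : |t| * c ≤ k * c := mul_le_mul_of_nonneg_right habs hc0
    have := Real.exp_le_exp.mpr this
    rw [hr]; linarith
  have hEd : ∀ t : ℝ, HasDerivAt E (p t) t := by
    intro t
    have h1 := hasDerivAt_exp_smul_const' (𝕂 := ℝ) x t
    have h2 := hasDerivAt_exp_smul_const' (𝕂 := ℝ) y t
    have : HasDerivAt E _ t := h1.mul h2
    convert this using 1
    rw [hp, hE]
    noncomm_ring
  have hwd : ∀ t : ℝ, HasDerivAt w (p t) t := fun t => (hEd t).sub_const 1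
  -- norm bounds for p on I
  have hexpb : ∀ (v : A) (t : ℝ), t ∈ I → ‖exp (t • v)‖ ≤ Real.exp (k * ‖v‖) - 1 + ‖(1 : A)‖ := by
    intro v t ht
    have habs : |t| ≤ k := le_of_lt (abs_lt.mpr ⟨ht.1, ht.2⟩)
    have h1 : ‖exp (t • v)‖ ≤ ‖exp (t • v) - 1‖ + ‖(1 : A)‖ := by
      calc ‖exp (t • v)‖ = ‖exp (t • v) - 1 + 1‖ := by congr 1; abel
        _ ≤ ‖exp (t • v) - 1‖ + ‖(1 : A)‖ := norm_add_le _ _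
    have h2 : ‖exp (t • v) - 1‖ ≤ Real.exp (|t| * ‖v‖) - 1 := by
      have := aux_norm_exp_sub_one (t • v)
      rwa [norm_smul, Real.norm_eq_abs] at this
    have h3 : Real.exp (|t| * ‖v‖) ≤ Real.exp (k * ‖v‖) :=
      Real.exp_le_exp.mpr (mul_le_mul_of_nonneg_right habs (norm_nonneg v))
    linarith
  set Mx := Real.exp (k * ‖x‖) - 1 + ‖(1 : A)‖ with hMx
  set My := Real.exp (k * ‖y‖) - 1 + ‖(1 : A)‖ with hMy
  have hMx0 : 0 ≤ Mx := by
    have : (1 : ℝ) ≤ Real.exp (k * ‖x‖) := Real.one_le_exp (by positivity)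
    rw [hMx]; linarith
  have hMy0 : 0 ≤ My := by
    have : (1 : ℝ) ≤ Real.exp (k * ‖y‖) := Real.one_le_exp (by positivity)
    rw [hMy]; linarith
  set P := ‖x‖ * (r + ‖(1 : A)‖) + Mx * ‖y‖ * My with hP
  have hP0 : 0 ≤ P := by positivity
  have hpt : ∀ t ∈ I, ‖p t‖ ≤ P := by
    intro t ht
    have hEb : ‖E t‖ ≤ r + ‖(1 : A)‖ := by
      have : ‖E t‖ ≤ ‖E t - 1‖ + ‖(1 : A)‖ := by
        calc ‖E t‖ = ‖E t - 1 + 1‖ := by congr 1; abel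
          _ ≤ ‖E t - 1‖ + ‖(1 : A)‖ := norm_add_le _ _
      have := hwt t ht
      rw [hwdef] at this
      linarith [this]
    have hx1 := hexpb x t ht
    have hy1 := hexpb y t ht
    rw [hp, hP]
    refine le_trans (norm_add_le _ _) ?_
    gcongr
    · exact le_trans (norm_mul_le _ _) (by gcongr)
    · refine le_trans (norm_mul_le _ _) ?_
      refine le_trans (mul_le_mul_of_nonneg_right (norm_mul_le _ _) (norm_nonneg _)) ?_
      gcongr
  -- the series of functions
  set g : ℕ → ℝ → ℝ := fun n t => ((-1 : ℝ) ^ n / (n + 1)) * φ (w t ^ (n + 1)) with hg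
  set g' : ℕ → ℝ → ℝ := fun n t => (-1 : ℝ) ^ n * φ (w t ^ n * p t) with hg'
  have collapse : ∀ (t : ℝ) (n : ℕ),
      φ (∑ i ∈ Finset.range (n + 1), w t ^ i * p t * w t ^ (n - i))
        = (n + 1 : ℝ) * φ (w t ^ n * p t) := by
    intro t n
    rw [map_sum]
    have he : ∀ i ∈ Finset.range (n + 1),
        φ (w t ^ i * p t * w t ^ (n - i)) = φ (w t ^ n * p t) := by
      intro i hi
      have hin : i ≤ n := Nat.lt_succ_iff.mp (Finset.mem_range.mp hi)
      rw [hτ (w t ^ i * p t) (w t ^ (n - i)), ← mul_assoc, ← pow_add,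
        Nat.sub_add_cancel hin]
    rw [Finset.sum_congr rfl he, Finset.sum_const, Finset.card_range, nsmul_eq_mul]
    push_cast; ring
  have hgd : ∀ (n : ℕ) (t : ℝ), t ∈ I → HasDerivAt (g n) (g' n t) t := by
    intro n t _
    have hpow := aux_pow_hasDerivAt (hwd t) n
    have hφc := (φ.hasFDerivAt).comp_hasDerivAt t hpow
    have hmul := hφc.const_mul ((-1 : ℝ) ^ n / (n + 1))
    have hval : ((-1 : ℝ) ^ n / (n + 1)) *
        φ (∑ i ∈ Finset.range (n + 1), w t ^ i * p t * w t ^ (n - i)) = g' n t := by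
      rw [collapse t n, hg']
      have hne : ((n : ℝ) + 1) ≠ 0 := by positivity
      field_simp
    rw [← hval]
    exact hmul
  -- derivative bounds
  set u : ℕ → ℝ := fun n => (‖φ‖ * (‖(1 : A)‖ * P)) * r ^ n with hu
  have hgb : ∀ (n : ℕ) (t : ℝ), t ∈ I → ‖g' n t‖ ≤ u n := by
    intro n t ht
    have hwn : ‖w t ^ n * p t‖ ≤ ‖(1 : A)‖ * (r ^ n * P) := by
      rcases Nat.eq_zero_or_pos n with hn | hn
      · subst hn
        simp only [pow_zero, one_mul]
        nlinarith [hpt t ht, hP0, h1A, norm_nonneg (p t)]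
      · refine le_trans (norm_mul_le _ _) ?_
        have h1 : ‖w t ^ n‖ ≤ r ^ n :=
          le_trans (norm_pow_le' _ hn) (pow_le_pow_left₀ (norm_nonneg _) (hwt t ht) n)
        have h2 := hpt t ht
        have h3 : ‖w t ^ n‖ * ‖p t‖ ≤ r ^ n * P :=
          mul_le_mul h1 h2 (norm_nonneg _) (pow_nonneg hr0 n)
        have h4 : 0 ≤ r ^ n * P := mul_nonneg (pow_nonneg hr0 n) hP0
        nlinarith [h3, h4, h1A]
    rw [hg', hu]
    rw [Real.norm_eq_abs, abs_mul, abs_pow, abs_neg, abs_one, one_pow, one_mul]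
    calc |φ (w t ^ n * p t)| ≤ ‖φ‖ * ‖w t ^ n * p t‖ := φ.le_opNorm _
      _ ≤ ‖φ‖ * (‖(1 : A)‖ * (r ^ n * P)) := by gcongr
      _ = ‖φ‖ * (‖(1 : A)‖ * P) * r ^ n := by ring
  have husum : Summable u := by
    exact (summable_geometric_of_lt_one hr0 hr1).mul_left _
  -- value at 0
  have hw0 : w 0 = 0 := by
    rw [hwdef, hE]; simp
  have hg0 : ∀ n : ℕ, g n 0 = 0 := by
    intro n
    rw [hg]
    simp [hw0, zero_pow (Nat.succ_ne_zero n)]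
  have hg0sum : Summable fun n => g n 0 := by
    simpa [funext hg0] using summable_zero
  -- derivative of the sum
  have Hd : ∀ t ∈ I, HasDerivAt (fun z => ∑' n, g n z) (∑' n, g' n t) t := by
    intro t ht
    exact hasDerivAt_tsum_of_isPreconnected husum isOpen_Ioo
      (convex_Ioo (-k) k).isPreconnected hgd hgb h0I hg0sum ht
  -- compute the derivative sum
  have hsum_deriv : ∀ t ∈ I, (∑' n, g' n t) = φ x + φ y := by
    intro t ht
    set a := w t with haw
    have har : ‖a‖ < 1 := lt_of_le_of_lt (hwt t ht) hr1
    have hna : ‖-a‖ < 1 := by rwa [norm_neg]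
    have hgeom : Summable fun n : ℕ => (-a) ^ n := summable_geometric_of_norm_lt_one hna
    have hgeom' : Summable fun n : ℕ => (-a) ^ n * p t := hgeom.mul_right _
    have h1aE : (1 : A) + a = E t := by rw [haw, hwdef]; simp
    set S := ∑' n : ℕ, (-a) ^ n with hS
    have hSE : S * E t = 1 := by
      have := geom_series_mul_neg (-a) hna
      rwa [sub_neg_eq_add, h1aE] at this
    have hES : E t * S = 1 := by
      have := mul_neg_geom_series (-a) hna
      rwa [sub_neg_eq_add, h1aE] at this
    have hterm : ∀ n : ℕ, g' n t = φ ((-a) ^ n * p t) := by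
      intro n
      rw [hg']
      have : (-a) ^ n = ((-1 : ℝ) ^ n) • a ^ n := by
        rw [← smul_pow, neg_one_smul]
      rw [this, smul_mul_assoc, map_smul, smul_eq_mul]
    have hstep : (∑' n, g' n t) = φ (S * p t) := by
      rw [tsum_congr hterm, ← φ.map_tsum hgeom', hS, hgeom.tsum_mul_right]
    -- identify S with the explicit inverse
    set v := exp (-(t • y)) * exp (-(t • x)) with hv
    have hnegx : exp (-(t • x)) * exp (t • x) = 1 := aux_exp_neg_mul _
    have hnegy : exp (t • y) * exp (-(t • y)) = 1 := aux_exp_mul_neg _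
    have hnegy' : exp (-(t • y)) * exp (t • y) = 1 := aux_exp_neg_mul _
    have hnegx' : exp (t • x) * exp (-(t • x)) = 1 := aux_exp_mul_neg _
    have hEv : E t * v = 1 := by
      rw [hv, hE]
      calc exp (t • x) * exp (t • y) * (exp (-(t • y)) * exp (-(t • x)))
          = exp (t • x) * (exp (t • y) * exp (-(t • y))) * exp (-(t • x)) := by
            noncomm_ring
        _ = 1 := by rw [hnegy, mul_one, hnegx']
    have hSv : S = v := by
      calc S = S * (E t * v) := by rw [hEv, mul_one]
        _ = (S * E t) * v := (mul_assoc S (E t) v).symm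
        _ = v := by rw [hSE, one_mul]
    have hfirst : φ (S * (x * E t)) = φ x := by
      rw [hτ S (x * E t), mul_assoc, hES, mul_one]
    have hsecond : φ (S * (exp (t • x) * y * exp (t • y))) = φ y := by
      rw [hSv, hv]
      have hexpand : exp (-(t • y)) * exp (-(t • x)) *
          (exp (t • x) * y * exp (t • y))
            = exp (-(t • y)) * (y * exp (t • y)) := by
        calc exp (-(t • y)) * exp (-(t • x)) * (exp (t • x) * y * exp (t • y))
            = exp (-(t • y)) * ((exp (-(t • x)) * exp (t • x)) * (y * exp (t • y))) := by
              noncomm_ring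
          _ = exp (-(t • y)) * (y * exp (t • y)) := by rw [hnegx, one_mul]
      rw [hexpand, hτ _ (y * exp (t • y)), mul_assoc, hnegy, mul_one]
    rw [hstep, hp, mul_add, map_add, hfirst, hsecond]
  -- constancy argument
  set H : ℝ → ℝ := fun t => (∑' n, g n t) - (φ x + φ y) * t with hH
  have hHd : ∀ t ∈ I, HasDerivWithinAt H 0 I t := by
    intro t ht
    have h1 := (Hd t ht).sub (((hasDerivAt_id t).const_mul (φ x + φ y)))
    have : (∑' n, g' n t) - (φ x + φ y) * 1 = 0 := by
      rw [hsum_deriv t ht]; ring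
    rw [this] at h1
    exact h1.hasDerivWithinAt
  have hMVT := (convex_Ioo (-k) k).norm_image_sub_le_of_norm_hasDerivWithin_le
    (C := 0) (f' := fun _ => (0 : ℝ)) hHd (fun t _ => by simp) h0I h1I
  have hH10 : H 1 = H 0 := by
    have : ‖H 1 - H 0‖ ≤ 0 := by simpa using hMVT
    have := le_antisymm this (norm_nonneg _)
    rwa [norm_eq_zero, sub_eq_zero] at this
  have hH0 : H 0 = 0 := by
    rw [hH]
    simp [funext hg0, tsum_zero]
  have hgsum1 : (∑' n, g n 1) = φ x + φ y := by
    have := hH10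
    rw [hH0, hH] at this
    have h2 : (∑' n, g n 1) - (φ x + φ y) * 1 = 0 := this
    linarith [h2]
  -- final identification
  have hw1 : w 1 = exp x * exp y - 1 := by
    rw [hwdef, hE]; simp
  have hwr : ‖exp x * exp y - 1‖ ≤ r := by
    rw [← hw1]; exact hwt 1 h1I
  have hSig : Summable fun n : ℕ =>
      ((-1 : ℝ) ^ n / (n + 1)) • (exp x * exp y - 1) ^ (n + 1) := by
    refine Summable.of_norm_bounded
      ((summable_geometric_of_lt_one hr0 hr1).mul_left r) (fun n => ?_)
    rw [norm_smul, Real.norm_eq_abs]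
    have h1 : |(-1 : ℝ) ^ n / ((n : ℝ) + 1)| ≤ 1 := by
      rw [abs_div, abs_pow, abs_neg, abs_one, one_pow,
        abs_of_nonneg (by positivity : (0:ℝ) ≤ (n : ℝ) + 1), div_le_one (by positivity)]
      linarith [Nat.cast_nonneg (α := ℝ) n]
    have h2 : ‖(exp x * exp y - 1) ^ (n + 1)‖ ≤ r ^ (n + 1) :=
      le_trans (norm_pow_le' _ (Nat.succ_pos n)) (pow_le_pow_left₀ (norm_nonneg _) hwr _)
    calc |(-1 : ℝ) ^ n / (n + 1)| * ‖(exp x * exp y - 1) ^ (n + 1)‖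
        ≤ 1 * r ^ (n + 1) := by
          apply mul_le_mul h1 h2 (norm_nonneg _) one_pos.le
      _ = r * r ^ n := by rw [one_mul, pow_succ]; ring
  rw [φ.map_tsum hSig]
  rw [← hgsum1]
  refine tsum_congr fun n => ?_
  simp only [hg, map_smul, smul_eq_mul, hw1]

end Aux

/-- In a complex Banach algebra, if `‖x‖ + ‖y‖ < log 2` then
`log(e^x e^y) − (x + y)` lies in the closed linear span of commutators `[A, A]`,
where `log(e^x e^y)` is given by the convergent series
`∑ (−1)ⁿ/(n+1) (e^x e^y − 1)^{n+1}`. -/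
theorem stmt_18 {A : Type*} [NormedRing A] [NormedAlgebra ℂ A] [CompleteSpace A]
    (x y : A) (h : ‖x‖ + ‖y‖ < Real.log 2) :
    (∑' n : ℕ, (((-1 : ℂ) ^ n / (n + 1)) • (exp x * exp y - 1) ^ (n + 1))) - (x + y)
      ∈ closure (Submodule.span ℂ {z : A | ∃ c d : A, z = c * d - d * c} : Set A) := by
  set V : Set A := (Submodule.span ℂ {z : A | ∃ c d : A, z = c * d - d * c} : Set A) with hV
  -- rewrite with real exponentials and real scalars
  have hcoef : ∀ n : ℕ, ((-1 : ℂ) ^ n / (n + 1)) = ((((-1 : ℝ) ^ n / (n + 1) : ℝ) : ℂ)) := by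
    intro n; push_cast; ring
  have hexp : (exp : A → A) = exp := rfl
  have hz : (∑' n : ℕ, (((-1 : ℂ) ^ n / (n + 1)) • (exp x * exp y - 1) ^ (n + 1)))
      = ∑' n : ℕ, (((-1 : ℝ) ^ n / (n + 1)) • (exp x * exp y - 1) ^ (n + 1)) := by
    refine tsum_congr fun n => ?_
    rw [hcoef n, Complex.coe_smul]
  rw [hz]
  set z := (∑' n : ℕ, (((-1 : ℝ) ^ n / (n + 1)) • (exp x * exp y - 1) ^ (n + 1))) - (x + y)
    with hzdef
  by_contra hnz
  obtain ⟨φ, u, hub, hlt⟩ := geometric_hahn_banach_closed_point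
    (((Submodule.span ℂ {z : A | ∃ c d : A, z = c * d - d * c}).restrictScalars ℝ).convex.closure)
    isClosed_closure hnz
  -- φ vanishes on the span
  have hφ0 : ∀ a ∈ Submodule.span ℂ {z : A | ∃ c d : A, z = c * d - d * c}, φ a = 0 := by
    intro a ha
    by_contra hne
    have hmem : ∀ m : ℝ, m • a ∈ V := by
      intro m
      have : (m : ℂ) • a ∈ Submodule.span ℂ {z : A | ∃ c d : A, z = c * d - d * c} :=
        Submodule.smul_mem _ _ ha
      rwa [Complex.coe_smul] at this
    have hbound : ∀ m : ℝ, m * φ a < u := by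
      intro m
      have := hub (m • a) (subset_closure (hmem m))
      rwa [map_smul, smul_eq_mul] at this
    have := hbound ((|u| + 1) / φ a)
    rw [div_mul_cancel₀ _ hne] at this
    linarith [le_abs_self u]
  -- trace property
  have hτ : ∀ c d : A, φ (c * d) = φ (d * c) := by
    intro c d
    have hmem : c * d - d * c ∈ Submodule.span ℂ {z : A | ∃ c d : A, z = c * d - d * c} :=
      Submodule.subset_span ⟨c, d, rfl⟩
    have := hφ0 _ hmem
    rw [map_sub] at this
    linarith
  -- u is positive
  have hu0 : (0 : ℝ) < u := by
    have h0m : (0 : A) ∈ closure V :=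
      subset_closure (Submodule.zero_mem (Submodule.span ℂ _))
    have := hub 0 h0m
    rwa [map_zero] at this
  -- key computation: φ z = 0
  have hkey := aux_key x y h φ hτ
  have hφz : φ z = 0 := by
    rw [hzdef, map_sub, map_add, hkey]
    ring
  rw [hφz] at hlt
  linarith
end
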